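/- arXiv:1401.2071 — 4 statements merged into one kernel-verified Lean document; each statement's English description precedes it below -/
import Mathlib

section
/- Let k ≥ 0 and let V_k = {(x,y) ∈ ℤ² : 0 ≤ x ≤ 8·2^k − 4, y ∈ {0,1}}, with n = 16·2^k − 6 points, equipped with the rectilinear (L¹) distance d((x₁,y₁),(x₂,y₂)) = |x₁ − x₂| + |y₁ − y₂|. Then there exists an enumeration x₀, x₁, …, x_{n−1} of all points of V_k with x₀ = (0,0) and x_{n−1} = (4·2^k − 2, 1) such that for every i < n−1 and every point y ∈ V_k not among x₀,…,x_i one has d(x_i, x_{i+1}) ≤ d(x_i, y), and Σ_{i<n−1} d(x_i, x_{i+1}) = (12 + 4k)·2^k − 3. -/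
set_option maxHeartbeats 1000000

namespace NNRP

def dz (p q : ℤ × ℤ) : ℤ := ((p.1 - q.1).natAbs : ℤ) + ((p.2 - q.2).natAbs : ℤ)

def shift (t : ℤ) (p : ℤ × ℤ) : ℤ × ℤ := (p.1 + t, p.2)

def M (j : ℕ) : ℤ := 8 * 2 ^ j - 3

def tour : ℕ → List (ℤ × ℤ)
  | 0 => [(0,0),(0,1),(1,1),(1,0),(2,0),(3,0),(4,0),(4,1),(3,1),(2,1)]
  | (j+1) =>
      tour j ++ ((M j, 1) :: (M j, 0) :: (M j + 1, 0) :: (M j + 2, 0) ::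
        ((tour j).map (shift (M j + 3)) ++ [(M j + 2, 1), (M j + 1, 1)]))

def inG (j : ℕ) (p : ℤ × ℤ) : Prop :=
  0 ≤ p.1 ∧ p.1 ≤ 8 * 2 ^ j - 4 ∧ (p.2 = 0 ∨ p.2 = 1)

def U (j : ℕ) : Set (ℤ × ℤ) := {q | inG j q ∨ 8 * 2 ^ j - 3 ≤ q.1 ∨ (q.1 < 0 ∧ q.2 = 1)}

def E (j : ℕ) : ℤ × ℤ := (4 * 2 ^ j - 2, 1)

lemma one_le_dz {p y : ℤ × ℤ} (h : y ≠ p) : 1 ≤ dz p y := by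
  have : ¬ (y.1 = p.1 ∧ y.2 = p.2) := fun hc => h (Prod.ext hc.1 hc.2)
  simp only [dz]; omega

lemma dz_shift (t : ℤ) (p q : ℤ × ℤ) : dz (shift t p) (shift t q) = dz p q := by
  simp only [dz, shift]; omega

lemma shift_inj (t : ℤ) : Function.Injective (shift t) := by
  intro p q h
  simp only [shift, Prod.ext_iff] at h ⊢
  omega

lemma shift_surj (t : ℤ) : Function.Surjective (shift t) := by
  intro p; exact ⟨(p.1 - t, p.2), by simp [shift]⟩

def NNfrom (S : Set (ℤ × ℤ)) : List (ℤ × ℤ) → Prop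
  | [] => True
  | [_] => True
  | p :: q :: t => (∀ y ∈ S, y ≠ p → dz p q ≤ dz p y) ∧ NNfrom (S \ {p}) (q :: t)

def pathLen : List (ℤ × ℤ) → ℤ
  | [] => 0
  | [_] => 0
  | p :: q :: t => dz p q + pathLen (q :: t)

lemma NNfrom_cons₂ {S : Set (ℤ × ℤ)} {p q : ℤ × ℤ} {t : List (ℤ × ℤ)} :
    NNfrom S (p :: q :: t) ↔
      (∀ y ∈ S, y ≠ p → dz p q ≤ dz p y) ∧ NNfrom (S \ {p}) (q :: t) := Iff.rfl

lemma NNfrom_anti : ∀ (l : List (ℤ × ℤ)) {S S' : Set (ℤ × ℤ)},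
    S' ⊆ S → NNfrom S l → NNfrom S' l
  | [], _, _, _, _ => trivial
  | [_], _, _, _, _ => trivial
  | p :: q :: t, S, S', hs, h =>
    ⟨fun y hy hne => h.1 y (hs hy) hne,
     NNfrom_anti (q :: t) (Set.diff_subset_diff_left hs) h.2⟩

lemma NNfrom_cons_unit {S : Set (ℤ × ℤ)} {p q : ℤ × ℤ} {t : List (ℤ × ℤ)}
    (h1 : dz p q = 1) (h2 : NNfrom (S \ {p}) (q :: t)) : NNfrom S (p :: q :: t) :=
  ⟨fun _ _ hy => h1 ▸ one_le_dz hy, h2⟩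

lemma NNfrom_append_of : ∀ (a : List (ℤ × ℤ)) {S : Set (ℤ × ℤ)} {q : ℤ × ℤ} {b : List (ℤ × ℤ)},
    NNfrom S (a ++ [q]) → NNfrom (S \ {x | x ∈ a}) (q :: b) → NNfrom S (a ++ q :: b) := by
  intro a
  induction a with
  | nil =>
    intro S q b _ h2
    exact NNfrom_anti _ (by simp) h2
  | cons p a' ih =>
    intro S q b h1 h2
    cases a' with
    | nil =>
      refine ⟨h1.1, ?_⟩
      exact NNfrom_anti _ (by intro y hy; simp only [Set.mem_diff, Set.mem_setOf_eq,
        List.mem_singleton, Set.mem_singleton_iff] at *; tauto) h2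
    | cons r a'' =>
      refine ⟨h1.1, ih h1.2 (NNfrom_anti _ ?_ h2)⟩
      intro y hy
      simp only [Set.mem_diff, Set.mem_setOf_eq, Set.mem_singleton_iff, List.mem_cons] at *
      tauto

lemma NNfrom_prefix : ∀ (a : List (ℤ × ℤ)) {S : Set (ℤ × ℤ)} {b : List (ℤ × ℤ)},
    NNfrom S (a ++ b) → NNfrom S a
  | [], _, _, _ => trivial
  | [_], _, _, _ => trivial
  | p :: q :: t, S, b, h => ⟨h.1, NNfrom_prefix (q :: t) h.2⟩

lemma NNfrom_shift (t : ℤ) : ∀ (l : List (ℤ × ℤ)) (S : Set (ℤ × ℤ)),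
    NNfrom S l → NNfrom (shift t '' S) (l.map (shift t)) := by
  intro l
  induction l with
  | nil => intro S _; trivial
  | cons p l' ih =>
    intro S h
    cases l' with
    | nil => trivial
    | cons q t' =>
      refine ⟨?_, ?_⟩
      · rintro y ⟨y', hy', rfl⟩ hne
        rw [dz_shift, dz_shift]
        exact h.1 y' hy' (fun he => hne (by rw [he]))
      · have := ih (S \ {p}) h.2
        rwa [Set.image_diff (shift_inj t), Set.image_singleton] at this

lemma NNfrom_getD : ∀ (l : List (ℤ × ℤ)) (S : Set (ℤ × ℤ)), NNfrom S l →
    ∀ i, i + 1 < l.length → ∀ y ∈ S, (∀ j, j ≤ i → l.getD j (0,0) ≠ y) →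
      dz (l.getD i (0,0)) (l.getD (i+1) (0,0)) ≤ dz (l.getD i (0,0)) y := by
  intro l
  induction l with
  | nil => intro S _ i hi; simp at hi
  | cons p t ih =>
    intro S h i hi y hy hvis
    cases t with
    | nil => simp at hi
    | cons q t' =>
      cases i with
      | zero =>
        simpa using h.1 y hy (fun he => hvis 0 (le_refl 0) (by simpa using he.symm))
      | succ i' =>
        have hyd : y ∈ S \ {p} := ⟨hy, fun he => hvis 0 (Nat.zero_le _)
          (by simpa using (Set.mem_singleton_iff.1 he).symm)⟩
        have := ih (S \ {p}) h.2 i' (by simpa using hi) y hyd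
          (fun j hj => by simpa using hvis (j+1) (Nat.succ_le_succ hj))
        simpa using this

lemma pathLen_cons₂ (p q : ℤ × ℤ) (t : List (ℤ × ℤ)) :
    pathLen (p :: q :: t) = dz p q + pathLen (q :: t) := rfl

lemma sum_getD_pathLen : ∀ (l : List (ℤ × ℤ)),
    ∑ i ∈ Finset.range (l.length - 1), dz (l.getD i (0,0)) (l.getD (i+1) (0,0)) = pathLen l := by
  intro l
  induction l with
  | nil => simp [pathLen]
  | cons p t ih =>
    cases t with
    | nil => simp [pathLen]
    | cons q t' =>
      have hlen : (p :: q :: t').length - 1 = (q :: t').length - 1 + 1 := by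
        simp
      rw [hlen, Finset.sum_range_succ']
      simp only [List.getD_cons_succ, List.getD_cons_zero]
      simp only [List.getD_cons_succ] at ih
      rw [ih, pathLen_cons₂]
      ring

lemma pathLen_append' : ∀ (a : List (ℤ × ℤ)) (w q : ℤ × ℤ) (b : List (ℤ × ℤ)),
    pathLen (a ++ [w] ++ q :: b) = pathLen (a ++ [w]) + dz w q + pathLen (q :: b) := by
  intro a
  induction a with
  | nil => intro w q b; simp [pathLen_cons₂, pathLen]
  | cons p a' ih =>
    intro w q b
    cases a' with
    | nil =>
      show pathLen (p :: w :: q :: b) = pathLen (p :: [w]) + dz w q + pathLen (q :: b)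
      rw [pathLen_cons₂, pathLen_cons₂]
      show dz p w + (dz w q + pathLen (q :: b)) = (dz p w + pathLen ([w])) + dz w q + pathLen (q :: b)
      show dz p w + (dz w q + pathLen (q :: b)) = (dz p w + 0) + dz w q + pathLen (q :: b)
      ring
    | cons r a'' =>
      show pathLen (p :: (r :: a'' ++ [w] ++ q :: b)) = pathLen (p :: (r :: a'' ++ [w])) + dz w q + pathLen (q :: b)
      rw [show p :: (r :: a'' ++ [w] ++ q :: b) = p :: r :: (a'' ++ [w] ++ q :: b) by simp,
          show p :: (r :: a'' ++ [w]) = p :: r :: (a'' ++ [w]) by simp,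
          pathLen_cons₂]
      rw [show (r :: (a'' ++ [w] ++ q :: b)) = (r :: a'') ++ [w] ++ q :: b by simp]
      rw [ih w q b, pathLen_cons₂]
      rw [show r :: (a'' ++ [w]) = (r :: a'') ++ [w] by simp]
      ring

lemma pathLen_map_shift (t : ℤ) : ∀ (l : List (ℤ × ℤ)),
    pathLen (l.map (shift t)) = pathLen l
  | [] => rfl
  | [_] => rfl
  | p :: q :: l => by
    show dz (shift t p) (shift t q) + pathLen ((q :: l).map (shift t)) = dz p q + pathLen (q :: l)
    rw [dz_shift, pathLen_map_shift t (q :: l)]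

lemma length_tour : ∀ j, (tour j).length = 16 * 2 ^ j - 6 := by
  intro j
  induction j with
  | zero => rfl
  | succ j ih =>
    have h1 : 1 ≤ 2 ^ j := Nat.one_le_two_pow
    simp only [tour, List.length_append, List.length_cons, List.length_map, ih,
      List.length_cons, List.length_nil, pow_succ]
    omega

lemma tour_head : ∀ j, ∃ t, tour j = (0,0) :: t := by
  intro j
  induction j with
  | zero => exact ⟨_, rfl⟩
  | succ j ih =>
    obtain ⟨t, ht⟩ := ih
    exact ⟨_, by rw [tour, ht]; rfl⟩

lemma tour_last : ∀ j, ∃ t, tour j = t ++ [(4 * 2 ^ j - 2, 1)] := by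
  intro j
  induction j with
  | zero => exact ⟨[(0,0),(0,1),(1,1),(1,0),(2,0),(3,0),(4,0),(4,1),(3,1)], by norm_num [tour]⟩
  | succ j _ =>
    refine ⟨tour j ++ ((M j, 1) :: (M j, 0) :: (M j + 1, 0) :: (M j + 2, 0) ::
        ((tour j).map (shift (M j + 3)) ++ [(M j + 2, 1)])), ?_⟩
    have hpt : ((4 : ℤ) * 2 ^ (j+1) - 2, (1:ℤ)) = (M j + 1, 1) := by
      have hp : (0:ℤ) < 2 ^ j := pow_pos (by norm_num) j
      simp only [M, pow_succ, Prod.mk.injEq]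
      exact ⟨by ring, trivial⟩
    rw [hpt, tour]
    simp

lemma mem_tour_bound : ∀ j p, p ∈ tour j → inG j p := by
  intro j
  induction j with
  | zero =>
    intro p hp
    fin_cases hp <;> simp [inG] <;> norm_num
  | succ j ih =>
    intro p hp
    obtain ⟨x, y⟩ := p
    have hp2 : (0:ℤ) < 2 ^ j := pow_pos (by norm_num) j
    simp only [tour, List.mem_append, List.mem_cons, List.mem_map, List.mem_singleton,
      List.mem_nil_iff, or_false] at hp
    simp only [inG, M, pow_succ] at *
    rcases hp with h | h | h | h | h | h | h | h
    · have := ih _ h; simp only [inG] at this; omega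
    · simp only [Prod.mk.injEq] at h; omega
    · simp only [Prod.mk.injEq] at h; omega
    · simp only [Prod.mk.injEq] at h; omega
    · simp only [Prod.mk.injEq] at h; omega
    · obtain ⟨p', hp', heq⟩ := h
      have := ih _ hp'
      simp only [shift, Prod.mk.injEq] at heq
      obtain ⟨h1, h2⟩ := heq
      omega
    · simp only [Prod.mk.injEq] at h; omega
    · simp only [Prod.mk.injEq] at h; omega

lemma mem_tour_of : ∀ j p, inG j p → p ∈ tour j := by
  intro j
  induction j with
  | zero =>
    rintro ⟨x, y⟩ h
    simp only [inG] at h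
    norm_num at h
    rw [tour]
    simp only [List.mem_cons, List.mem_nil_iff, Prod.mk.injEq, or_false]
    omega
  | succ j ih =>
    rintro ⟨x, y⟩ h
    simp only [inG, pow_succ] at h
    have hp2 : (0:ℤ) < 2 ^ j := pow_pos (by norm_num) j
    simp only [tour, List.mem_append, List.mem_cons, List.mem_map, List.mem_nil_iff, or_false]
    by_cases h1 : x ≤ 8 * 2 ^ j - 4
    · exact Or.inl (ih _ ⟨h.1, h1, h.2.2⟩)
    · by_cases h2 : x ≤ 8 * 2 ^ j - 1
      · right
        have hx : x = M j ∨ x = M j + 1 ∨ x = M j + 2 := by simp only [M]; omega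
        have hy : y = 0 ∨ y = 1 := h.2.2
        simp only [Prod.mk.injEq]
        rcases hx with hx | hx | hx <;> rcases hy with hy | hy <;> subst hx <;> subst hy <;> tauto
      · right; right; right; right; right; left
        refine ⟨(x - (M j + 3), y), ih _ ⟨?_, ?_, h.2.2⟩, by simp [shift]⟩
        · simp only [M]; omega
        · simp only [M]; omega

lemma nodup_tour : ∀ j, (tour j).Nodup := by
  intro j
  induction j with
  | zero => decide
  | succ j ih =>
    have hp2 : (0:ℤ) < 2 ^ j := pow_pos (by norm_num) j
    have hbound : ∀ p ∈ tour j, 0 ≤ p.1 ∧ p.1 ≤ M j - 1 := by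
      intro p hp
      have := mem_tour_bound j p hp
      simp only [inG, M] at *
      omega
    have hmap : ∀ (z : ℤ × ℤ), z.1 ≤ M j + 2 → ¬∃ a ∈ tour j, shift (M j + 3) a = z := by
      rintro z hz ⟨p', hp', heq⟩
      have := hbound p' hp'
      rw [← heq] at hz
      simp only [shift] at hz
      omega
    rw [tour, List.nodup_append]
    refine ⟨ih, ?_, ?_⟩
    · simp only [List.nodup_cons, List.mem_cons, List.mem_append, List.mem_map,
        List.mem_singleton, List.mem_nil_iff, Prod.mk.injEq, not_or]
      refine ⟨⟨by simp, by omega, by omega, hmap _ (by omega), by omega, by omega, by simp⟩,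
        ⟨by omega, by omega, hmap _ (by omega), by omega, by omega, by simp⟩,
        ⟨by omega, hmap _ (by omega), by omega, by simp, by simp⟩,
        ⟨hmap _ (by omega), by simp, by omega, by simp⟩, ?_⟩
      rw [List.nodup_append]
      refine ⟨List.Nodup.map (shift_inj _) ih, ?_, ?_⟩
      · simp only [List.nodup_cons, List.mem_singleton, List.mem_nil_iff, Prod.mk.injEq,
          List.nodup_nil, and_true, not_and, not_false_iff]
        intro h; omega
      · rintro p hpm _ hmem rfl
        simp only [List.mem_map] at hpm
        obtain ⟨p', hp', heq⟩ := hpm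
        have hb := hbound p' hp'
        simp only [List.mem_cons, List.mem_nil_iff, or_false] at hmem
        rcases hmem with h | h
        · rw [h] at heq; simp only [shift, Prod.ext_iff] at heq; omega
        · rw [h] at heq; simp only [shift, Prod.ext_iff] at heq; omega
    · rintro p hp _ hmem rfl
      have hb := hbound p hp
      simp only [List.mem_cons, List.mem_append, List.mem_map, List.mem_singleton,
        List.mem_nil_iff, or_false] at hmem
      rcases hmem with h|h|h|h|⟨p2,hp2',heq⟩|h|h
      · rw [h] at hb; simp at hb <;> omega
      · rw [h] at hb; simp at hb <;> omega
      · rw [h] at hb; simp at hb <;> omega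
      · rw [h] at hb; simp at hb <;> omega
      · have := hbound p2 hp2'
        rw [← heq] at hb
        simp only [shift] at hb
        omega
      · rw [h] at hb; simp at hb <;> omega
      · rw [h] at hb; simp at hb <;> omega

lemma pathLen_tour : ∀ j, pathLen (tour j) = (12 + 4 * (j:ℤ)) * 2 ^ j - 3 := by
  intro j
  induction j with
  | zero => norm_num; decide
  | succ j ih =>
    have hp : (0:ℤ) < 2 ^ j := pow_pos (by norm_num) j
    obtain ⟨t, ht⟩ := tour_last j
    obtain ⟨tl, htl⟩ := tour_head j
    set w : ℤ × ℤ := (4 * 2 ^ j - 2, 1) with hw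
    -- decompose
    rw [tour]
    rw [show (tour j ++ ((M j, 1) :: (M j, 0) :: (M j + 1, 0) :: (M j + 2, 0) ::
        ((tour j).map (shift (M j + 3)) ++ [(M j + 2, 1), (M j + 1, 1)])))
      = (t ++ [w]) ++ ((M j, 1) :: ((M j, 0) :: (M j + 1, 0) :: (M j + 2, 0) ::
        ((tour j).map (shift (M j + 3)) ++ [(M j + 2, 1), (M j + 1, 1)]))) from by rw [← ht]]
    rw [pathLen_append', ← ht, ih]
    rw [pathLen_cons₂, pathLen_cons₂, pathLen_cons₂]
    rw [show ((M j + 2, (0:ℤ)) :: ((tour j).map (shift (M j + 3)) ++ [(M j + 2, 1), (M j + 1, 1)]))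
      = (M j + 2, (0:ℤ)) :: (shift (M j + 3) (0,0)) :: ((tl.map (shift (M j + 3))) ++ [(M j + 2, 1), (M j + 1, 1)]) from by
        rw [htl]; simp]
    rw [pathLen_cons₂]
    rw [show ((shift (M j + 3) ((0:ℤ),(0:ℤ))) :: ((tl.map (shift (M j + 3))) ++ [(M j + 2, 1), (M j + 1, 1)]))
      = ((tour j).map (shift (M j + 3))) ++ ((M j + 2, 1) :: [(M j + 1, 1)]) from by
        rw [htl]; simp]
    rw [show ((tour j).map (shift (M j + 3))) = (t.map (shift (M j + 3))) ++ [shift (M j + 3) w] from by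
        rw [ht]; simp]
    rw [pathLen_append']
    rw [show (t.map (shift (M j + 3))) ++ [shift (M j + 3) w] = (tour j).map (shift (M j + 3)) from by
        rw [ht]; simp]
    rw [pathLen_map_shift, ih, pathLen_cons₂]
    show _ + dz w (M j, 1) + (dz (M j, 1) (M j, 0) + (dz (M j, 0) (M j + 1, 0) +
      (dz (M j + 1, 0) (M j + 2, 0) + (dz (M j + 2, 0) (shift (M j + 3) (0,0)) +
      (_ + dz (shift (M j + 3) w) (M j + 2, 1) + (dz (M j + 2, 1) (M j + 1, 1) + pathLen _)))))) = _
    have e1 : dz w (M j, 1) = 4 * 2 ^ j - 1 := by simp only [dz, hw, M]; omega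
    have e2 : dz ((M j : ℤ), (1:ℤ)) (M j, 0) = 1 := by simp only [dz]; omega
    have e3 : dz ((M j : ℤ), (0:ℤ)) (M j + 1, 0) = 1 := by simp only [dz]; omega
    have e4 : dz ((M j + 1 : ℤ), (0:ℤ)) (M j + 2, 0) = 1 := by simp only [dz]; omega
    have e5 : dz ((M j + 2 : ℤ), (0:ℤ)) (shift (M j + 3) (0,0)) = 1 := by
      simp only [dz, shift]; omega
    have e6 : dz (shift (M j + 3) w) ((M j + 2 : ℤ), (1:ℤ)) = 4 * 2 ^ j - 1 := by
      simp only [dz, shift, hw, M]; omega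
    have e7 : dz ((M j + 2 : ℤ), (1:ℤ)) (M j + 1, 1) = 1 := by simp only [dz]; omega
    have e8 : pathLen [((M j + 1 : ℤ), (1:ℤ))] = 0 := rfl
    rw [e1, e2, e3, e4, e5, e6, e7, e8]
    push_cast
    ring

lemma right_cases (j : ℕ) {S : Set (ℤ × ℤ)} (hS : S ⊆ U (j+1)) (a b : ℤ)
    (hzS : ((a + (M j + 3), b) : ℤ × ℤ) ∈ S)
    (hzA : ((a + (M j + 3), b) : ℤ × ℤ) ∉ tour j)
    (hz2 : ((a + (M j + 3), b) : ℤ × ℤ) ≠ (M j, 0))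
    (hz3 : ((a + (M j + 3), b) : ℤ × ℤ) ≠ (M j + 1, 0))
    (hz4 : ((a + (M j + 3), b) : ℤ × ℤ) ≠ (M j + 2, 0)) :
    inG j (a, b) ∨ (8 * 2 ^ j - 3 ≤ a) ∨ (a < 0 ∧ b = 1) := by
  have hp : (0:ℤ) < 2 ^ j := pow_pos (by norm_num) j
  have hyU := hS hzS
  simp only [U, inG, Set.mem_setOf_eq, pow_succ] at hyU ⊢
  simp only [ne_eq, Prod.mk.injEq, not_and] at hz2 hz3 hz4
  rcases hyU with hin | hr | hl
  · by_cases ha : 0 ≤ a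
    · simp only [M] at *; omega
    · rcases hin.2.2 with hb | hb
      · exfalso
        by_cases hx : a + (M j + 3) ≤ 8 * 2 ^ j - 4
        · exact hzA (mem_tour_of j _ ⟨hin.1, hx, Or.inl hb⟩)
        · simp only [M] at *; omega
      · simp only [M] at *; omega
  · simp only [M] at *; omega
  · simp only [M] at *; omega

lemma key : ∀ (j : ℕ), ∀ (S : Set (ℤ × ℤ)) (q : ℤ × ℤ),
    S ⊆ U j →
    (∀ y ∈ S, ¬ inG j y → dz (E j) q ≤ dz (E j) y) →
    NNfrom S (tour j ++ [q]) := by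
  intro j
  induction j with
  | zero =>
    intro S q hS hq
    have hE : E 0 = ((2:ℤ), (1:ℤ)) := by norm_num [E]
    rw [hE] at hq
    show NNfrom S ((0,0)::(0,1)::(1,1)::(1,0)::(2,0)::(3,0)::(4,0)::(4,1)::(3,1)::(2,1)::[q])
    refine NNfrom_cons_unit (by decide) ?_
    refine NNfrom_cons_unit (by decide) ?_
    refine NNfrom_cons_unit (by decide) ?_
    refine NNfrom_cons_unit (by decide) ?_
    refine NNfrom_cons_unit (by decide) ?_
    refine NNfrom_cons_unit (by decide) ?_
    refine NNfrom_cons_unit (by decide) ?_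
    refine NNfrom_cons_unit (by decide) ?_
    refine NNfrom_cons_unit (by decide) ?_
    refine ⟨?_, trivial⟩
    intro y hy hne
    simp only [Set.mem_diff, Set.mem_singleton_iff] at hy
    obtain ⟨⟨⟨⟨⟨⟨⟨⟨⟨hyS, h1⟩, h2⟩, h3⟩, h4⟩, h5⟩, h6⟩, h7⟩, h8⟩, h9⟩ := hy
    refine hq y hyS ?_
    intro hin
    have hmem := mem_tour_of 0 y hin
    rw [tour] at hmem
    simp only [List.mem_cons, List.mem_nil_iff, or_false] at hmem
    rcases hmem with h|h|h|h|h|h|h|h|h|h <;> subst h <;> simp_all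
  | succ j ih =>
    intro S q hS hq
    have hp : (0:ℤ) < 2 ^ j := pow_pos (by norm_num) j
    have hUsub : U (j+1) ⊆ U j := by
      rintro ⟨a, b⟩ hy
      simp only [U, inG, Set.mem_setOf_eq, pow_succ] at hy ⊢
      omega
    obtain ⟨tl, htl⟩ := tour_head j
    rw [tour, show (tour j ++ ((M j, 1) :: (M j, 0) :: (M j + 1, 0) :: (M j + 2, 0) ::
        ((tour j).map (shift (M j + 3)) ++ [(M j + 2, 1), (M j + 1, 1)]))) ++ [q]
      = tour j ++ ((M j, 1) :: (M j, 0) :: (M j + 1, 0) :: (M j + 2, 0) ::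
        ((tour j).map (shift (M j + 3)) ++ ((M j + 2, 1) :: (M j + 1, 1) :: [q]))) from by simp]
    apply NNfrom_append_of
    · apply ih S (M j, 1) (fun y hy => hUsub (hS hy))
      rintro ⟨a, b⟩ hy hnin
      have hyU := hS hy
      simp only [U, inG, Set.mem_setOf_eq, pow_succ] at hyU
      simp only [inG] at hnin
      simp only [dz, E, M] at hnin ⊢ <;> omega
    · refine NNfrom_cons_unit (by simp only [dz]; omega) ?_
      refine NNfrom_cons_unit (by simp only [dz]; omega) ?_
      refine NNfrom_cons_unit (by simp only [dz]; omega) ?_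
      rw [show ((tour j).map (shift (M j + 3)) ++ ((M j + 2, 1) :: (M j + 1, 1) :: [q]))
        = (M j + 3, 0) :: (tl.map (shift (M j + 3)) ++ ((M j + 2, 1) :: (M j + 1, 1) :: [q])) from by
          rw [htl]; simp [shift]]
      refine NNfrom_cons_unit (by simp only [dz]; omega) ?_
      rw [show ((M j + 3, (0:ℤ)) :: (tl.map (shift (M j + 3)) ++ ((M j + 2, 1) :: (M j + 1, 1) :: [q])))
        = ((tour j).map (shift (M j + 3)) ++ ((M j + 2, 1) :: ((M j + 1, 1) :: [q]))) from by
          rw [htl]; simp [shift]]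
      set S4 : Set (ℤ × ℤ) := ((((S \ {x | x ∈ tour j}) \ {(M j, 1)}) \ {(M j, 0)}) \ {(M j + 1, 0)}) \ {(M j + 2, 0)} with hS4def
      have hS4facts : ∀ z ∈ S4, z ∈ S ∧ z ∉ tour j ∧ z ≠ (M j, 1) ∧ z ≠ (M j, 0)
          ∧ z ≠ (M j + 1, 0) ∧ z ≠ (M j + 2, 0) := by
        intro z hz
        rw [hS4def] at hz
        simp only [Set.mem_diff, Set.mem_setOf_eq, Set.mem_singleton_iff] at hz
        tauto
      apply NNfrom_append_of
      · have hkey := ih ((shift (M j + 3)) ⁻¹' S4) (-1, 1) ?_ ?_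
        · have hsh := NNfrom_shift (M j + 3) _ _ hkey
          rw [Set.image_preimage_eq _ (shift_surj _), List.map_append] at hsh
          simpa [shift, show (-1 : ℤ) + (M j + 3) = M j + 2 from by ring] using hsh
        · rintro ⟨a, b⟩ hy
          rw [Set.mem_preimage] at hy
          obtain ⟨hzS, hzA, hz1, hz2, hz3, hz4⟩ := hS4facts _ hy
          have := right_cases j hS a b hzS hzA hz2 hz3 hz4
          simpa only [U, Set.mem_setOf_eq] using this
        · rintro ⟨a, b⟩ hy hnin
          rw [Set.mem_preimage] at hy
          obtain ⟨hzS, hzA, hz1, hz2, hz3, hz4⟩ := hS4facts _ hy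
          have hc := right_cases j hS a b hzS hzA hz2 hz3 hz4
          simp only [inG] at hnin
          simp only [inG, M] at hc
          simp only [dz, E, M] at hnin hc ⊢ <;> omega
      · refine NNfrom_cons_unit (by simp only [dz]; omega) ?_
        refine ⟨?_, trivial⟩
        intro y hy hne
        have hE : E (j+1) = (M j + 1, 1) := by
          simp only [E, M, pow_succ, Prod.mk.injEq]
          constructor
          · ring
          · trivial
        simp only [Set.mem_diff, Set.mem_setOf_eq, Set.mem_singleton_iff] at hy
        obtain ⟨⟨hyS4, hymap⟩, hy2⟩ := hy
        obtain ⟨hyS, hyA, h1, h2, h3, h4⟩ := hS4facts _ hyS4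
        rw [← hE]
        refine hq y hyS ?_
        intro hin
        have hmem := mem_tour_of (j+1) y hin
        rw [tour] at hmem
        simp only [List.mem_append, List.mem_cons, List.mem_nil_iff, or_false] at hmem
        rcases hmem with h | h | h | h | h | h | h | h
        · exact hyA h
        · exact h1 h
        · exact h2 h
        · exact h3 h
        · exact h4 h
        · exact hymap (by simpa using h)
        · exact hy2 h
        · exact hne h

lemma NNfrom_U_tour (k : ℕ) : NNfrom (U k) (tour k) := by
  apply NNfrom_prefix (tour k) (b := [((8 * 2 ^ k - 3 : ℤ), (1 : ℤ))])
  apply key k (U k) _ (subset_refl _)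
  rintro ⟨a, b⟩ hy hnin
  have hp : (0:ℤ) < 2 ^ k := pow_pos (by norm_num) k
  simp only [U, Set.mem_setOf_eq, inG] at hy hnin
  simp only [dz, E]
  omega

end NNRP

/-- On the `2 × (8·2^k − 3)` grid `V_k` with the rectilinear (L¹) distance,
there is a partial nearest-neighbor tour through all of `V_k` starting at `(0,0)`,
ending at `(4·2^k − 2, 1)`, of total length `(12 + 4k)·2^k − 3`. -/
theorem nnr_partial_tour_rectilinear (k : ℕ) (n : ℕ) (hn : n = 16 * 2 ^ k - 6)
    (V : Set (ℤ × ℤ))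
    (hV : V = {p : ℤ × ℤ | 0 ≤ p.1 ∧ p.1 ≤ 8 * 2 ^ k - 4 ∧ (p.2 = 0 ∨ p.2 = 1)})
    (d : ℤ × ℤ → ℤ × ℤ → ℝ)
    (hd : ∀ p q : ℤ × ℤ, d p q = |(p.1 : ℝ) - (q.1 : ℝ)| + |(p.2 : ℝ) - (q.2 : ℝ)|) :
    ∃ x : ℕ → ℤ × ℤ,
      (∀ i < n, x i ∈ V) ∧
      (∀ i < n, ∀ j < n, x i = x j → i = j) ∧
      (∀ p ∈ V, ∃ i < n, x i = p) ∧
      x 0 = (0, 0) ∧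
      x (n - 1) = (4 * 2 ^ k - 2, 1) ∧
      (∀ i < n - 1, ∀ y ∈ V, (∀ j ≤ i, x j ≠ y) →
        d (x i) (x (i + 1)) ≤ d (x i) y) ∧
      ∑ i ∈ Finset.range (n - 1), d (x i) (x (i + 1))
        = (12 + 4 * (k : ℝ)) * 2 ^ k - 3 := by
  have hd' : ∀ p q : ℤ × ℤ, d p q = ((NNRP.dz p q : ℤ) : ℝ) := by
    intro p q
    rw [hd]
    simp only [NNRP.dz]
    push_cast [Nat.cast_natAbs]
    ring
  have hnp : 1 ≤ 2 ^ k := Nat.one_le_two_pow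
  have hlen : (NNRP.tour k).length = n := by rw [NNRP.length_tour k, hn]
  have hVG : ∀ p, p ∈ V ↔ NNRP.inG k p := by
    intro p; rw [hV]; simp only [Set.mem_setOf_eq, NNRP.inG]
  refine ⟨fun i => (NNRP.tour k).getD i (0,0), ?_, ?_, ?_, ?_, ?_, ?_, ?_⟩
  · intro i hi
    have hi' : i < (NNRP.tour k).length := by omega
    show (NNRP.tour k).getD i (0,0) ∈ V
    rw [List.getD_eq_getElem _ _ hi', hVG]
    exact NNRP.mem_tour_bound k _ (List.getElem_mem hi')
  · intro i hi j hj heq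
    have hi' : i < (NNRP.tour k).length := by omega
    have hj' : j < (NNRP.tour k).length := by omega
    have heq' : (NNRP.tour k).getD i (0,0) = (NNRP.tour k).getD j (0,0) := heq
    rw [List.getD_eq_getElem _ _ hi', List.getD_eq_getElem _ _ hj'] at heq'
    exact (List.Nodup.getElem_inj_iff (NNRP.nodup_tour k)).1 heq' 
  · intro p hp
    have hmem : p ∈ NNRP.tour k := NNRP.mem_tour_of k p ((hVG p).1 hp)
    obtain ⟨i, hi, hgi⟩ := List.mem_iff_getElem.1 hmem
    refine ⟨i, by omega, ?_⟩
    show (NNRP.tour k).getD i (0,0) = p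
    rw [List.getD_eq_getElem _ _ hi]; exact hgi
  · obtain ⟨tl, htl⟩ := NNRP.tour_head k
    rw [htl]; rfl
  · obtain ⟨t, ht⟩ := NNRP.tour_last k
    have hlt : (NNRP.tour k).length = t.length + 1 := by rw [ht]; simp
    have hn1 : n - 1 = t.length := by omega
    have h2 : n - 1 < (NNRP.tour k).length := by omega
    show (NNRP.tour k).getD (n-1) (0,0) = _
    rw [List.getD_eq_getElem _ _ h2]
    have := List.getElem_concat_length (l := t) (a := ((4 * 2 ^ k - 2 : ℤ), (1:ℤ))) (i := n-1) (by omega)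
    rw [← ht] at this
    exact this (by omega)
  · intro i hi y hyV hvis
    have hyU : y ∈ NNRP.U k := by
      simp only [NNRP.U, Set.mem_setOf_eq]
      exact Or.inl ((hVG y).1 hyV)
    have := NNRP.NNfrom_getD (NNRP.tour k) (NNRP.U k) (NNRP.NNfrom_U_tour k) i
      (by omega) y hyU hvis
    rw [hd', hd']
    exact_mod_cast this
  · have hsum := NNRP.sum_getD_pathLen (NNRP.tour k)
    rw [NNRP.pathLen_tour k] at hsum
    have hrange : n - 1 = (NNRP.tour k).length - 1 := by omega
    calc ∑ i ∈ Finset.range (n - 1), d ((NNRP.tour k).getD i (0,0)) ((NNRP.tour k).getD (i+1) (0,0))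
        = ∑ i ∈ Finset.range (n - 1), ((NNRP.dz ((NNRP.tour k).getD i (0,0)) ((NNRP.tour k).getD (i+1) (0,0)) : ℤ) : ℝ) := by
          exact Finset.sum_congr rfl (fun i _ => hd' _ _)
      _ = (((∑ i ∈ Finset.range (n - 1), NNRP.dz ((NNRP.tour k).getD i (0,0)) ((NNRP.tour k).getD (i+1) (0,0))) : ℤ) : ℝ) := by
          push_cast; ring
      _ = (12 + 4 * (k : ℝ)) * 2 ^ k - 3 := by
          rw [hrange, hsum]
          push_cast
          ring
end

section
/- Let k ≥ 0 and let V_k = {(x,y) ∈ ℤ² : 0 ≤ x ≤ 8·2^k − 4, y ∈ {0,1}}, with n = 16·2^k − 6 points, equipped with the euclidean (L²) distance d((x₁,y₁),(x₂,y₂)) = √((x₁ − x₂)² + (y₁ − y₂)²). Then there exists an enumeration x₀, x₁, …, x_{n−1} of all points of V_k with x₀ = (0,0) and x_{n−1} = (4·2^k − 2, 1) such that for every i < n−1 and every point y ∈ V_k not among x₀,…,x_i one has d(x_i, x_{i+1}) ≤ d(x_i, y), and Σ_{i<n−1} d(x_i, x_{i+1}) = (12 + 4k)·2^k − 3. -/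
/-- squared distance on the integer grid -/
def D2 (p q : ℤ × ℤ) : ℤ := (p.1 - q.1)^2 + (p.2 - q.2)^2

noncomputable def dcan (p q : ℤ × ℤ) : ℝ :=
  Real.sqrt (((p.1 : ℝ) - (q.1 : ℝ))^2 + ((p.2 : ℝ) - (q.2 : ℝ))^2)

def shiftL (s : ℤ) (l : List (ℤ × ℤ)) : List (ℤ × ℤ) := l.map fun p => (p.1 + s, p.2)

def NNRL (E : Set (ℤ × ℤ)) : List (ℤ × ℤ) → Prop
  | [] => True
  | [_] => True
  | a :: b :: t => ((∀ y ∈ E, D2 a b ≤ D2 a y) ∧ (∀ y ∈ b :: t, D2 a b ≤ D2 a y))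
      ∧ NNRL E (b :: t)

noncomputable def tourLen : List (ℤ × ℤ) → ℝ
  | a :: b :: t => dcan a b + tourLen (b :: t)
  | _ => 0

def tour : ℕ → List (ℤ × ℤ)
  | 0 => [(0,0),(0,1),(1,1),(1,0),(2,0),(3,0),(4,0),(4,1),(3,1),(2,1)]
  | k+1 =>
    tour k ++ ([(8 * 2^k - 3,1),(8 * 2^k - 3,0),(8 * 2^k - 2,0),(8 * 2^k - 1,0)] ++
      (shiftL (8 * 2^k) (tour k) ++ [(8 * 2^k - 1,1),(8 * 2^k - 2,1)]))

lemma NNRL_nil (E : Set (ℤ × ℤ)) : NNRL E [] := trivial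
lemma NNRL_single (E : Set (ℤ × ℤ)) (a) : NNRL E [a] := trivial
lemma NNRL_cons_cons {E : Set (ℤ × ℤ)} {a b t} :
    NNRL E (a :: b :: t) ↔
      (((∀ y ∈ E, D2 a b ≤ D2 a y) ∧ (∀ y ∈ b :: t, D2 a b ≤ D2 a y))
      ∧ NNRL E (b :: t)) := Iff.rfl

lemma int_one_le_sq {z : ℤ} (hz : z ≠ 0) : 1 ≤ z^2 := by
  rcases lt_or_gt_of_ne hz with h | h
  · nlinarith
  · nlinarith

lemma one_le_D2 {a y : ℤ × ℤ} (h : a ≠ y) : 1 ≤ D2 a y := by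
  rcases a with ⟨a1, a2⟩; rcases y with ⟨y1, y2⟩
  simp only [D2]
  by_cases h1 : a1 = y1
  · have h2 : a2 ≠ y2 := by simp [h1] at h; exact h
    have : a2 - y2 ≠ 0 := by omega
    nlinarith [sq_nonneg (a1 - y1), int_one_le_sq this]
  · have : a1 - y1 ≠ 0 := by omega
    nlinarith [sq_nonneg (a2 - y2), int_one_le_sq this]

lemma D2_ge_fst (a y : ℤ × ℤ) : (a.1 - y.1)^2 ≤ D2 a y := by
  simp only [D2]; nlinarith [sq_nonneg (a.2 - y.2)]

lemma dcan_eq_sqrt_D2 (p q : ℤ × ℤ) : dcan p q = Real.sqrt ((D2 p q : ℝ)) := by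
  simp only [dcan, D2]; push_cast; ring_nf

lemma dcan_of_D2_one {p q : ℤ × ℤ} (h : D2 p q = 1) : dcan p q = 1 := by
  rw [dcan_eq_sqrt_D2, h]; simp

lemma dcan_le_dcan {p q y : ℤ × ℤ} (h : D2 p q ≤ D2 p y) : dcan p q ≤ dcan p y := by
  rw [dcan_eq_sqrt_D2, dcan_eq_sqrt_D2]
  exact Real.sqrt_le_sqrt (by exact_mod_cast h)

lemma dcan_horiz {p q r : ℤ} (h : q ≤ p) : dcan (p, r) (q, r) = ((p - q : ℤ) : ℝ) := by
  rw [dcan_eq_sqrt_D2]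
  have : (D2 (p,r) (q,r) : ℝ) = ((p - q : ℤ) : ℝ)^2 := by
    simp only [D2]; push_cast; ring
  rw [this, Real.sqrt_sq (by exact_mod_cast sub_nonneg.mpr h)]

lemma dcan_horiz' {p q r : ℤ} (h : p ≤ q) : dcan (p, r) (q, r) = ((q - p : ℤ) : ℝ) := by
  rw [dcan_eq_sqrt_D2]
  have : (D2 (p,r) (q,r) : ℝ) = ((q - p : ℤ) : ℝ)^2 := by
    simp only [D2]; push_cast; ring
  rw [this, Real.sqrt_sq (by exact_mod_cast sub_nonneg.mpr h)]

lemma nodup4 {a b c d : ℤ × ℤ} (h1 : a ≠ b) (h2 : a ≠ c) (h3 : a ≠ d) (h4 : b ≠ c)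
    (h5 : b ≠ d) (h6 : c ≠ d) : List.Nodup [a,b,c,d] := by
  simp [List.nodup_cons, h1, h2, h3, h4, h5, h6]

lemma nodup2 {a b : ℤ × ℤ} (h1 : a ≠ b) : List.Nodup [a,b] := by
  simp [List.nodup_cons, h1]

lemma ne_of_fst {a b : ℤ × ℤ} (h : a.1 ≠ b.1) : a ≠ b := fun he => h (by rw [he])
lemma ne_of_snd {a b : ℤ × ℤ} (h : a.2 ≠ b.2) : a ≠ b := fun he => h (by rw [he])
lemma NNRL_of_unit (E : Set (ℤ × ℤ)) :
    ∀ l : List (ℤ × ℤ), l.Nodup → l.Chain' (fun a b => D2 a b = 1) →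
      (∀ a ∈ l, ∀ y ∈ E, a ≠ y) → NNRL E l := by
  intro l
  induction l with
  | nil => intro _ _ _; trivial
  | cons a t ih =>
    intro hnd hch hdisj
    cases t with
    | nil => trivial
    | cons b t' =>
      rw [NNRL_cons_cons]
      have hab : D2 a b = 1 := (List.isChain_cons_cons.mp hch).1
      have hanotin : a ∉ b :: t' := (List.nodup_cons.mp hnd).1
      refine ⟨⟨?_, ?_⟩, ?_⟩
      · intro y hy
        rw [hab]; exact one_le_D2 (hdisj a (List.mem_cons_self) y hy)
      · intro y hy
        rw [hab]; exact one_le_D2 (fun h => hanotin (h ▸ hy))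
      · exact ih (List.nodup_cons.mp hnd).2 (List.isChain_cons_cons.mp hch).2
          (fun a' ha' => hdisj a' (List.mem_cons_of_mem _ ha'))

lemma NNRL_append {E : Set (ℤ × ℤ)} :
    ∀ (l₁ : List (ℤ × ℤ)) (l₂ : List (ℤ × ℤ)),
      NNRL (E ∪ {y | y ∈ l₂}) l₁ → NNRL E l₂ →
      (∀ a ∈ l₁.getLast?, ∀ b ∈ l₂.head?, (∀ y ∈ E, D2 a b ≤ D2 a y) ∧
        (∀ y ∈ l₂, D2 a b ≤ D2 a y)) →
      NNRL E (l₁ ++ l₂) := by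
  intro l₁
  induction l₁ with
  | nil => intro l₂ _ h₂ _; simpa using h₂
  | cons a t ih =>
    intro l₂ h₁ h₂ hb
    cases t with
    | nil =>
      cases l₂ with
      | nil => trivial
      | cons b t₂ =>
        rw [List.singleton_append, NNRL_cons_cons]
        have hb' := hb a (by simp) b (by simp)
        exact ⟨⟨hb'.1, hb'.2⟩, h₂⟩
    | cons c t' =>
      rw [List.cons_append, List.cons_append, NNRL_cons_cons]
      rw [NNRL_cons_cons] at h₁
      refine ⟨⟨?_, ?_⟩, ?_⟩
      · intro y hy; exact h₁.1.1 y (Or.inl hy)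
      · intro y hy
        rcases List.mem_cons.mp hy with rfl | hy'
        · exact h₁.1.2 y (List.mem_cons_self)
        · rcases List.mem_append.mp hy' with h | h
          · exact h₁.1.2 y (List.mem_cons_of_mem _ h)
          · exact h₁.1.1 y (Or.inr h)
      · rw [← List.cons_append]
        refine ih l₂ h₁.2 h₂ ?_
        intro x hx b hbb
        exact hb x (by rwa [List.getLast?_cons_cons]) b hbb

lemma D2_shift (s : ℤ) (a b : ℤ × ℤ) : D2 (a.1 + s, a.2) (b.1 + s, b.2) = D2 a b := by
  simp only [D2]; ring

lemma D2_shift' (s : ℤ) (a y : ℤ × ℤ) : D2 (a.1 + s, a.2) y = D2 a (y.1 - s, y.2) := by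
  simp only [D2]; ring

lemma NNRL_shiftL (s : ℤ) (E : Set (ℤ × ℤ)) :
    ∀ l : List (ℤ × ℤ), NNRL ((fun p : ℤ × ℤ => (p.1 + s, p.2)) ⁻¹' E) l →
      NNRL E (shiftL s l) := by
  intro l
  induction l with
  | nil => intro _; trivial
  | cons a t ih =>
    cases t with
    | nil => intro _; trivial
    | cons b t' =>
      intro h
      rw [NNRL_cons_cons] at h
      show NNRL E ((a.1+s, a.2) :: (b.1+s, b.2) :: shiftL s t')
      rw [NNRL_cons_cons]
      refine ⟨⟨?_, ?_⟩, ?_⟩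
      · intro y hy
        rw [D2_shift, D2_shift' s a y]
        refine h.1.1 (y.1 - s, y.2) ?_
        simp only [Set.mem_preimage, sub_add_cancel]
        exact hy
      · intro y hy
        rcases List.mem_cons.mp hy with rfl | hy'
        · simp
        · simp only [shiftL, List.mem_map] at hy'
          obtain ⟨z, hz, rfl⟩ := hy'
          rw [D2_shift, D2_shift]
          exact h.1.2 z (List.mem_cons_of_mem _ hz)
      · exact ih h.2

lemma shiftL_cons (s : ℤ) (a : ℤ × ℤ) (l : List (ℤ × ℤ)) :
    shiftL s (a :: l) = (a.1 + s, a.2) :: shiftL s l := rfl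

lemma mem_shiftL {s : ℤ} {p : ℤ × ℤ} {l : List (ℤ × ℤ)} :
    p ∈ shiftL s l ↔ (p.1 - s, p.2) ∈ l := by
  simp only [shiftL, List.mem_map]
  constructor
  · rintro ⟨q, hq, rfl⟩; simpa using hq
  · intro h; exact ⟨(p.1 - s, p.2), h, by simp⟩

lemma tourLen_cons_cons (a b : ℤ × ℤ) (t : List (ℤ × ℤ)) :
    tourLen (a :: b :: t) = dcan a b + tourLen (b :: t) := rfl

lemma tourLen_split : ∀ (l₁ : List (ℤ × ℤ)) (a : ℤ × ℤ) (l₂ : List (ℤ × ℤ)),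
    tourLen (l₁ ++ a :: l₂) = tourLen (l₁ ++ [a]) + tourLen (a :: l₂) := by
  intro l₁
  induction l₁ with
  | nil => intro a l₂; simp [tourLen]
  | cons x t ih =>
    intro a l₂
    cases t with
    | nil => simp [tourLen_cons_cons, tourLen]
    | cons y t' =>
      simp only [List.cons_append] at ih ⊢
      rw [tourLen_cons_cons, tourLen_cons_cons, ih]
      ring

lemma tourLen_concat : ∀ (l : List (ℤ × ℤ)) (a x : ℤ × ℤ), l.getLast? = some a →
    tourLen (l ++ [x]) = tourLen l + dcan a x := by
  intro l
  induction l with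
  | nil => intro a x h; simp at h
  | cons b t ih =>
    intro a x h
    cases t with
    | nil =>
      simp only [List.getLast?_singleton, Option.some_inj] at h
      subst h
      simp [tourLen, tourLen_cons_cons]
    | cons c t' =>
      rw [List.getLast?_cons_cons] at h
      simp only [List.cons_append] at ih ⊢
      rw [tourLen_cons_cons, tourLen_cons_cons, ih a x h]
      ring

lemma tourLen_shiftL (s : ℤ) : ∀ l : List (ℤ × ℤ), tourLen (shiftL s l) = tourLen l := by
  intro l
  induction l with
  | nil => rfl
  | cons a t ih =>
    cases t with
    | nil => rfl
    | cons b t' =>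
      rw [shiftL_cons, shiftL_cons, tourLen_cons_cons, tourLen_cons_cons, ← shiftL_cons s b t', ih]
      congr 1
      simp only [dcan]
      congr 2 <;> push_cast <;> ring

lemma head?_append_some {l₁ l₂ : List (ℤ × ℤ)} {a : ℤ × ℤ} (h : l₁.head? = some a) :
    (l₁ ++ l₂).head? = some a := by
  cases l₁ with
  | nil => simp at h
  | cons x t => simpa using h
structure TourSpec (k : ℕ) (l : List (ℤ × ℤ)) : Prop where
  cov : ∀ p : ℤ × ℤ, p ∈ l ↔ (0 ≤ p.1 ∧ p.1 ≤ 8 * 2^k - 4 ∧ (p.2 = 0 ∨ p.2 = 1))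
  nodup : l.Nodup
  len : l.length = 16 * 2^k - 6
  hd : l.head? = some (0,0)
  lst : l.getLast? = some (4 * 2^k - 2, 1)
  nnr : ∀ E : Set (ℤ × ℤ), (∀ y ∈ E, y.1 ≤ -1 ∨ (8 * 2^k - 3 : ℤ) ≤ y.1) → NNRL E l
  tlen : tourLen l = (12 + 4 * (k : ℝ)) * 2 ^ k - 3

lemma spec_zero : TourSpec 0 (tour 0) := by
  constructor
  · intro p
    show p ∈ [((0:ℤ),(0:ℤ)),(0,1),(1,1),(1,0),(2,0),(3,0),(4,0),(4,1),(3,1),(2,1)] ↔ _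
    rcases p with ⟨p1, p2⟩
    simp only [List.mem_cons, List.not_mem_nil, or_false, Prod.mk.injEq]
    norm_num
    omega
  · decide
  · rfl
  · rfl
  · rfl
  · intro E hE
    apply NNRL_of_unit
    · decide
    · show List.Chain' (fun a b => D2 a b = 1)
        [((0:ℤ),(0:ℤ)),(0,1),(1,1),(1,0),(2,0),(3,0),(4,0),(4,1),(3,1),(2,1)]
      simp only [List.Chain', List.isChain_cons_cons, List.isChain_singleton, and_true]
      refine ⟨?_,?_,?_,?_,?_,?_,?_,?_,?_⟩ <;> decide
    · intro a ha y hy hay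
      subst hay
      rcases hE a hy with h | h
      · revert h
        fin_cases ha <;> norm_num
      · revert h
        fin_cases ha <;> norm_num
  · show tourLen [((0:ℤ),(0:ℤ)),(0,1),(1,1),(1,0),(2,0),(3,0),(4,0),(4,1),(3,1),(2,1)] = _
    rw [tourLen_cons_cons, tourLen_cons_cons, tourLen_cons_cons, tourLen_cons_cons,
      tourLen_cons_cons, tourLen_cons_cons, tourLen_cons_cons, tourLen_cons_cons,
      tourLen_cons_cons]
    have h1 : tourLen [((2:ℤ),(1:ℤ))] = 0 := rfl
    rw [h1]
    rw [dcan_of_D2_one (by decide), dcan_of_D2_one (by decide), dcan_of_D2_one (by decide),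
      dcan_of_D2_one (by decide), dcan_of_D2_one (by decide), dcan_of_D2_one (by decide),
      dcan_of_D2_one (by decide), dcan_of_D2_one (by decide), dcan_of_D2_one (by decide)]
    norm_num
lemma abs_sq_le {x z : ℤ} (h0 : 0 ≤ x) (h : x ≤ z ∨ z ≤ -x) : x^2 ≤ z^2 := by
  rcases h with h | h
  · nlinarith
  · nlinarith

lemma getLast?_append_some {l₁ l₂ : List (ℤ × ℤ)} {a : ℤ × ℤ} (h : l₂.getLast? = some a) :
    (l₁ ++ l₂).getLast? = some a := by
  rw [List.getLast?_append_of_ne_nil, h]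
  intro hn; rw [hn] at h; simp at h

lemma spec_succ (k : ℕ) (ih : TourSpec k (tour k)) : TourSpec (k+1) (tour (k+1)) := by
  obtain ⟨cov, nodup, len, hd, lst, nnr, tlen⟩ := ih
  have ht : (1:ℤ) ≤ 2^k := by exact_mod_cast Nat.one_le_two_pow
  set A : List (ℤ × ℤ) := tour k with hA
  set S : List (ℤ × ℤ) := shiftL (8*2^k) A with hS
  set M : List (ℤ × ℤ) := [(8*2^k-3,1),(8*2^k-3,0),(8*2^k-2,0),(8*2^k-1,0)] with hM
  set F : List (ℤ × ℤ) := [(8*2^k-1,1),(8*2^k-2,1)] with hF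
  have e : tour (k+1) = A ++ (M ++ (S ++ F)) := rfl
  -- membership facts
  have memA : ∀ p ∈ A, 0 ≤ p.1 ∧ p.1 ≤ 8*2^k-4 ∧ (p.2 = 0 ∨ p.2 = 1) :=
    fun p hp => (cov p).1 hp
  have memS : ∀ p ∈ S, 8*2^k ≤ p.1 ∧ p.1 ≤ 16*2^k-4 ∧ (p.2 = 0 ∨ p.2 = 1) := by
    intro p hp
    have h2 := (cov _).1 (mem_shiftL.mp hp)
    simp only at h2
    exact ⟨by omega, by omega, h2.2.2⟩
  have memM : ∀ p ∈ M, 8*2^k-3 ≤ p.1 ∧ p.1 ≤ 8*2^k-1 ∧ (p.2 = 0 ∨ p.2 = 1) := by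
    intro p hp
    simp only [hM, List.mem_cons, List.not_mem_nil, or_false] at hp
    rcases hp with rfl | rfl | rfl | rfl <;> refine ⟨?_, ?_, ?_⟩ <;> simp <;> omega
  have memF : ∀ p ∈ F, (8*2^k-2 ≤ p.1 ∧ p.1 ≤ 8*2^k-1 ∧ p.2 = 1) := by
    intro p hp
    simp only [hF, List.mem_cons, List.not_mem_nil, or_false] at hp
    rcases hp with rfl | rfl <;> refine ⟨?_, ?_, ?_⟩ <;> simp <;> omega
  have memR : ∀ p, p ∈ M ++ (S ++ F) → 8*2^k-3 ≤ p.1 ∧ p.1 ≤ 16*2^k-4 ∧ (p.2 = 0 ∨ p.2 = 1) := by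
    intro p hp
    rcases List.mem_append.mp hp with h | h
    · have := memM p h; exact ⟨this.1, by omega, this.2.2⟩
    · rcases List.mem_append.mp h with h | h
      · have := memS p h; exact ⟨by omega, this.2.1, this.2.2⟩
      · have := memF p h; exact ⟨by omega, by omega, Or.inr this.2.2⟩
  have hdS : S.head? = some (8*2^k, 0) := by
    rw [hS, shiftL, List.head?_map, hd]; simp
  have lstS : S.getLast? = some (12*2^k-2, 1) := by
    rw [hS, shiftL, List.getLast?_map, lst]
    simp only [Option.map_some, Option.some_inj, Prod.mk.injEq]
    exact ⟨by ring, trivial⟩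
  constructor
  -- cov
  · intro p
    rw [e]
    rw [List.mem_append]
    constructor
    · rintro (hp | hp)
      · have := memA p hp
        refine ⟨this.1, ?_, this.2.2⟩
        rw [pow_succ]; omega
      · have := memR p hp
        refine ⟨by omega, ?_, this.2.2⟩
        rw [pow_succ]; omega
    · rintro ⟨h0, h1, h2⟩
      rw [pow_succ] at h1
      by_cases hc : p.1 ≤ 8*2^k-4
      · exact Or.inl ((cov p).2 ⟨h0, hc, h2⟩)
      · right
        by_cases hc2 : 8*2^k ≤ p.1
        · refine List.mem_append.mpr (Or.inr (List.mem_append.mpr (Or.inl (mem_shiftL.mpr ((cov _).2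
            ⟨show (0:ℤ) ≤ p.1 - 8*2^k by omega,
             show p.1 - 8*2^k ≤ 8*2^k - 4 by omega,
             show (p.1 - 8*2^k, p.2).2 = 0 ∨ (p.1 - 8*2^k, p.2).2 = 1 by simpa using h2⟩)))))
        · rcases h2 with h2 | h2
          · refine List.mem_append.mpr (Or.inl ?_)
            rcases p with ⟨p1, p2⟩
            simp only [hM, List.mem_cons, Prod.mk.injEq, List.not_mem_nil, or_false]
            simp only at h0 h1 h2 hc hc2
            omega
          · by_cases h3 : p.1 = 8*2^k-3
            · refine List.mem_append.mpr (Or.inl ?_)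
              rcases p with ⟨p1, p2⟩
              simp only [hM, List.mem_cons, Prod.mk.injEq, List.not_mem_nil, or_false]
              simp only at h2 h3
              omega
            · refine List.mem_append.mpr (Or.inr (List.mem_append.mpr (Or.inr ?_)))
              rcases p with ⟨p1, p2⟩
              simp only [hF, List.mem_cons, Prod.mk.injEq, List.not_mem_nil, or_false]
              simp only at h0 h1 h2 hc hc2 h3
              omega
  -- nodup
  · rw [e]
    rw [List.nodup_append]
    refine ⟨nodup, ?_, ?_⟩
    · rw [List.nodup_append]
      refine ⟨?_, ?_, ?_⟩
      · exact nodup4 (ne_of_snd (by simp)) (ne_of_fst (by simp <;> omega))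
          (ne_of_fst (by simp <;> omega)) (ne_of_fst (by simp <;> omega))
          (ne_of_fst (by simp <;> omega)) (ne_of_fst (by simp <;> omega))
      · rw [List.nodup_append]
        refine ⟨?_, ?_, ?_⟩
        · exact List.Nodup.map (fun p q hpq => by
            simp only [Prod.mk.injEq] at hpq
            exact Prod.ext (by omega) hpq.2) nodup
        · exact nodup2 (ne_of_fst (by simp <;> omega))
        · rintro a haS _ haF rfl
          have h1 := memS a haS
          have h2 := memF a haF
          omega
      · rintro a haM _ haSF rfl
        have h1 := memM a haM
        rcases List.mem_append.mp haSF with h | h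
        · have h2 := memS a h; omega
        · simp only [hM, List.mem_cons, List.not_mem_nil, or_false] at haM
          simp only [hF, List.mem_cons, List.not_mem_nil, or_false] at h
          rcases haM with rfl | rfl | rfl | rfl <;> rcases h with h | h <;>
            simp only [Prod.mk.injEq] at h <;> omega
    · rintro a haA _ haR rfl
      have h1 := memA a haA
      have h2 := memR a haR
      omega
  -- len
  · rw [e]
    simp only [List.length_append, hM, hF, hS, shiftL, List.length_map, List.length_cons,
      List.length_nil, len]
    have h2 : (2:ℕ)^(k+1) = 2 * 2^k := by rw [pow_succ]; ring
    have hu : (1:ℕ) ≤ 2^k := Nat.one_le_two_pow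
    rw [h2]
    omega
  -- head
  · rw [e]; exact head?_append_some hd
  -- last
  · rw [e]
    have hlF : F.getLast? = some (8*2^k-2, 1) := rfl
    have hval : (4 * 2^(k+1) - 2 : ℤ) = 8*2^k-2 := by rw [pow_succ]; ring
    rw [hval]
    exact getLast?_append_some (l₁ := A) (getLast?_append_some (l₁ := M) (getLast?_append_some (l₁ := S) hlF))
  -- nnr
  · intro E hE
    rw [e]
    have hE' : ∀ y ∈ E, y.1 ≤ -1 ∨ 16*2^k - 3 ≤ y.1 := by
      intro y hy
      rcases hE y hy with h | h
      · exact Or.inl h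
      · right; rw [pow_succ] at h; omega
    apply NNRL_append
    · -- NNRL (E ∪ R) A
      apply nnr
      intro y hy
      rcases hy with hy | hy
      · rcases hE' y hy with h | h
        · exact Or.inl h
        · right; omega
      · right
        have := memR y hy
        omega
    · -- NNRL E R
      apply NNRL_append
      · -- NNRL (E ∪ (S++F)) M
        apply NNRL_of_unit
        · exact nodup4 (ne_of_snd (by simp)) (ne_of_fst (by simp <;> omega))
            (ne_of_fst (by simp <;> omega)) (ne_of_fst (by simp <;> omega))
            (ne_of_fst (by simp <;> omega)) (ne_of_fst (by simp <;> omega))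
        · simp only [hM, List.Chain', List.isChain_cons_cons, List.isChain_singleton, and_true]
          refine ⟨?_, ?_, ?_⟩ <;> simp [D2] <;> ring
        · intro a ha y hy hay
          subst hay
          have h1 := memM a ha
          rcases hy with hy | hy
          · rcases hE' a hy with h | h <;> omega
          · rcases List.mem_append.mp hy with h | h
            · have := memS a h; omega
            · simp only [hM, List.mem_cons, List.not_mem_nil, or_false] at ha
              simp only [hF, List.mem_cons, List.not_mem_nil, or_false] at h
              rcases ha with rfl | rfl | rfl | rfl <;> rcases h with h | h <;>
                simp only [Prod.mk.injEq] at h <;> omega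
      · -- NNRL E (S ++ F)
        apply NNRL_append
        · -- NNRL (E ∪ F) S
          apply NNRL_shiftL
          apply nnr
          intro y hy
          simp only [Set.mem_preimage] at hy
          rcases hy with hy | hy
          · rcases hE' _ hy with h | h
            · simp only at h; left; omega
            · simp only at h; right; omega
          · have := memF _ hy
            simp only at this
            left; omega
        · -- NNRL E F
          apply NNRL_of_unit
          · exact nodup2 (ne_of_fst (by simp <;> omega))
          · simp only [hF, List.Chain', List.isChain_cons_cons, List.isChain_singleton, and_true]
            simp [D2] <;> ring
          · intro a ha y hy hay
            subst hay
            have h1 := memF a ha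
            rcases hE' a hy with h | h <;> omega
        · -- bridge S → F
          intro a ha b hb
          rw [lstS] at ha
          rw [show F.head? = some (8*2^k-1,1) from rfl] at hb
          simp only [Option.mem_def, Option.some_inj] at ha hb
          subst ha; subst hb
          have hD : D2 (12*2^k-2, 1) (8*2^k-1, 1) = (4*2^k-1)^2 := by simp [D2] <;> ring
          constructor
          · intro y hy
            rw [hD]
            refine le_trans ?_ (D2_ge_fst _ y)
            show (4*2^k-1:ℤ)^2 ≤ (12*2^k-2 - y.1)^2
            rcases hE' y hy with h | h
            · exact abs_sq_le (by omega) (Or.inl (by omega))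
            · exact abs_sq_le (by omega) (Or.inr (by omega))
          · intro y hy
            simp only [hF, List.mem_cons, List.not_mem_nil, or_false] at hy
            rcases hy with rfl | rfl
            · exact le_refl _
            · rw [hD]
              have h4 : D2 (12*2^k-2, 1) (8*2^k-2, 1) = (4*2^k)^2 := by simp [D2] <;> ring
              rw [h4]
              exact abs_sq_le (by omega) (Or.inl (by omega))
      · -- bridge M → (S ++ F)
        intro a ha b hb
        have haM : (8*2^k-1, 0) = a := by
          rw [show M.getLast? = some (8*2^k-1,0) from rfl] at ha
          simpa using ha
        have hbS : (8*2^k, 0) = b := by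
          rw [head?_append_some hdS] at hb
          simpa using hb
        subst haM; subst hbS
        have hD : D2 (8*2^k-1, 0) (8*2^k, 0) = 1 := by simp [D2] <;> ring
        constructor
        · intro y hy
          rw [hD]
          apply one_le_D2
          intro hay
          subst hay
          rcases hE' _ hy with h | h <;> simp only at h <;> omega
        · intro y hy
          rw [hD]
          apply one_le_D2
          intro hay
          subst hay
          rcases List.mem_append.mp hy with h | h
          · have := memS _ h; simp only at this; omega
          · have := memF _ h; simp only at this; omega
    · -- bridge A → R
      intro a ha b hb
      rw [lst] at ha
      simp only [Option.mem_def, Option.some_inj] at ha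
      have hbv : (8*2^k-3, 1) = b := by
        rw [head?_append_some (show M.head? = some (8*2^k-3,1) from rfl)] at hb
        simpa using hb
      subst ha; subst hbv
      have hD : D2 (4*2^k-2, 1) (8*2^k-3, 1) = (4*2^k-1)^2 := by simp [D2] <;> ring
      constructor
      · intro y hy
        rw [hD]
        refine le_trans ?_ (D2_ge_fst _ y)
        show (4*2^k-1:ℤ)^2 ≤ (4*2^k-2 - y.1)^2
        rcases hE' y hy with h | h
        · exact abs_sq_le (by omega) (Or.inl (by omega))
        · exact abs_sq_le (by omega) (Or.inr (by omega))
      · intro y hy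
        rw [hD]
        refine le_trans ?_ (D2_ge_fst _ y)
        show (4*2^k-1:ℤ)^2 ≤ (4*2^k-2 - y.1)^2
        have := memR y hy
        exact abs_sq_le (by omega) (Or.inr (by omega))
  -- tlen
  · rw [e]
    obtain ⟨S', hS'⟩ : ∃ S', S = (8*2^k, 0) :: S' := by
      cases hSc : S with
      | nil => rw [hSc] at hdS; simp at hdS
      | cons x s' =>
        rw [hSc] at hdS
        simp only [List.head?_cons, Option.some_inj] at hdS
        exact ⟨s', by rw [hdS]⟩
    have hMsplit : M ++ (S ++ F) =
        (8*2^k-3,1) :: ((8*2^k-3,0) :: (8*2^k-2,0) :: (8*2^k-1,0) :: (S ++ F)) := rfl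
    rw [hMsplit, tourLen_split A _ _, tourLen_concat A _ _ lst]
    rw [tourLen_cons_cons, tourLen_cons_cons, tourLen_cons_cons]
    have hSF : tourLen ((8*2^k-1,0) :: (S ++ F)) = dcan (8*2^k-1,0) (8*2^k,0) + tourLen (S ++ F) := by
      rw [hS', List.cons_append, tourLen_cons_cons, ← List.cons_append, ← hS']
    rw [hSF]
    have hFsplit : S ++ F = S ++ ((8*2^k-1,1) :: [(8*2^k-2,1)]) := rfl
    rw [hFsplit, tourLen_split S _ _, tourLen_concat S _ _ lstS]
    have hlen2 : tourLen ((8*2^k-1,1) :: [(8*2^k-2,1)]) = dcan (8*2^k-1,1) (8*2^k-2,1) := by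
      rw [tourLen_cons_cons]; simp [tourLen]
    rw [hlen2]
    rw [show tourLen S = tourLen A from tourLen_shiftL _ _]
    rw [dcan_horiz (show (8*2^k-2:ℤ) ≤ 8*2^k-1 by omega)]
    rw [dcan_of_D2_one (show D2 ((8*2^k-3:ℤ),(1:ℤ)) (8*2^k-3,0) = 1 by simp [D2])]
    rw [dcan_of_D2_one (show D2 ((8*2^k-3:ℤ),(0:ℤ)) (8*2^k-2,0) = 1 by simp [D2] <;> ring)]
    rw [dcan_of_D2_one (show D2 ((8*2^k-2:ℤ),(0:ℤ)) (8*2^k-1,0) = 1 by simp [D2] <;> ring)]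
    rw [dcan_of_D2_one (show D2 ((8*2^k-1:ℤ),(0:ℤ)) (8*2^k,0) = 1 by simp [D2] <;> ring)]
    rw [dcan_horiz' (show (4*2^k-2:ℤ) ≤ 8*2^k-3 by omega)]
    rw [dcan_horiz (show (8*2^k-1:ℤ) ≤ 12*2^k-2 by omega)]
    rw [tlen]
    have hv1 : ((8*2^k-3 - (4*2^k-2) : ℤ) : ℝ) = 4*2^k-1 := by push_cast; ring
    have hv2 : ((12*2^k-2 - (8*2^k-1) : ℤ) : ℝ) = 4*2^k-1 := by push_cast; ring
    have hv3 : ((8*2^k-1 - (8*2^k-2) : ℤ) : ℝ) = 1 := by push_cast; ring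
    rw [hv1, hv2, hv3]
    push_cast [pow_succ]
    ring
lemma spec_tour : ∀ k, TourSpec k (tour k) := by
  intro k
  induction k with
  | zero => exact spec_zero
  | succ k ih => exact spec_succ k ih

lemma nnrl_get {E : Set (ℤ × ℤ)} :
    ∀ (l : List (ℤ × ℤ)), NNRL E l → ∀ i (h : i + 1 < l.length),
      ∀ y ∈ l.drop (i+1), D2 (l[i]'(by omega)) (l[i+1]'h) ≤ D2 (l[i]'(by omega)) y := by
  intro l
  induction l with
  | nil => intro _ i h; simp at h
  | cons a t ih =>
    intro hnn i h y hy
    cases t with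
    | nil => simp at h
    | cons b t' =>
      rw [NNRL_cons_cons] at hnn
      cases i with
      | zero =>
        simp only [List.getElem_cons_zero, List.getElem_cons_succ]
        simp only [List.drop_succ_cons, List.drop_zero] at hy
        exact hnn.1.2 y hy
      | succ i =>
        simp only [List.getElem_cons_succ]
        simp only [List.drop_succ_cons] at hy
        exact ih hnn.2 i (by simpa using h) y hy

lemma sum_tourLen : ∀ (l : List (ℤ × ℤ)), l ≠ [] →
    ∑ i ∈ Finset.range (l.length - 1), dcan (l.getD i (0,0)) (l.getD (i+1) (0,0)) = tourLen l := by
  intro l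
  induction l with
  | nil => intro h; simp at h
  | cons a t ih =>
    intro _
    cases t with
    | nil => simp [tourLen]
    | cons b t' =>
      have hlen : (a :: b :: t').length - 1 = (b :: t').length - 1 + 1 := by
        simp [List.length_cons]
      rw [hlen, Finset.sum_range_succ']
      have h1 : ∑ i ∈ Finset.range ((b :: t').length - 1),
          dcan ((a::b::t').getD (i+1) (0,0)) ((a::b::t').getD (i+1+1) (0,0))
          = tourLen (b :: t') := by
        rw [← ih (by simp)]
        refine Finset.sum_congr rfl (fun i _ => ?_)
        simp [List.getD_cons_succ]
      rw [h1]
      simp only [List.getD_cons_zero, List.getD_cons_succ]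
      rw [tourLen_cons_cons]
      ring
/-- On the `2 × (8·2^k − 3)` grid `V_k` with the euclidean (L²) distance,
there is a partial nearest-neighbor tour through all of `V_k` starting at `(0,0)`,
ending at `(4·2^k − 2, 1)`, of total length `(12 + 4k)·2^k − 3`. -/
theorem nnr_partial_tour_euclidean (k : ℕ) (n : ℕ) (hn : n = 16 * 2 ^ k - 6)
    (V : Set (ℤ × ℤ))
    (hV : V = {p : ℤ × ℤ | 0 ≤ p.1 ∧ p.1 ≤ 8 * 2 ^ k - 4 ∧ (p.2 = 0 ∨ p.2 = 1)})
    (d : ℤ × ℤ → ℤ × ℤ → ℝ)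
    (hd : ∀ p q : ℤ × ℤ,
      d p q = Real.sqrt (((p.1 : ℝ) - (q.1 : ℝ)) ^ 2 + ((p.2 : ℝ) - (q.2 : ℝ)) ^ 2)) :
    ∃ x : ℕ → ℤ × ℤ,
      (∀ i < n, x i ∈ V) ∧
      (∀ i < n, ∀ j < n, x i = x j → i = j) ∧
      (∀ p ∈ V, ∃ i < n, x i = p) ∧
      x 0 = (0, 0) ∧
      x (n - 1) = (4 * 2 ^ k - 2, 1) ∧
      (∀ i < n - 1, ∀ y ∈ V, (∀ j ≤ i, x j ≠ y) →
        d (x i) (x (i + 1)) ≤ d (x i) y) ∧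
      ∑ i ∈ Finset.range (n - 1), d (x i) (x (i + 1))
        = (12 + 4 * (k : ℝ)) * 2 ^ k - 3 := by
  obtain ⟨cov, nodup, len, hd', lst, nnr, tlen⟩ := spec_tour k
  set l := tour k with hl
  have hdfun : d = dcan := by
    funext p q
    rw [hd p q]
    rfl
  have h2k : (1:ℕ) ≤ 2^k := Nat.one_le_two_pow
  have hlen10 : 10 ≤ l.length := by rw [len]; omega
  have hn' : n = l.length := by rw [hn, len]
  refine ⟨fun i => l.getD i (0,0), ?_, ?_, ?_, ?_, ?_, ?_, ?_⟩
  · -- membership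
    intro i hi
    have hi' : i < l.length := by omega
    show l.getD i (0,0) ∈ V
    rw [List.getD_eq_getElem l (0,0) hi', hV]
    exact (cov _).1 (List.getElem_mem hi')
  · -- injectivity
    intro i hi j hj heq
    have hi' : i < l.length := by omega
    have hj' : j < l.length := by omega
    change l.getD i (0,0) = l.getD j (0,0) at heq
    rw [List.getD_eq_getElem l (0,0) hi', List.getD_eq_getElem l (0,0) hj'] at heq
    exact (List.Nodup.getElem_inj_iff nodup).mp heq
  · -- surjectivity
    intro p hp
    rw [hV] at hp
    obtain ⟨i, hi, hpi⟩ := List.mem_iff_getElem.mp ((cov p).2 hp)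
    exact ⟨i, by omega, by show l.getD i (0,0) = p; rw [List.getD_eq_getElem l (0,0) hi]; exact hpi⟩
  · -- start
    show l.getD 0 (0,0) = (0,0)
    cases hc : l with
    | nil => rw [hc] at hd'; simp at hd'
    | cons a t =>
      rw [hc] at hd'
      simp only [List.head?_cons, Option.some_inj] at hd'
      rw [List.getD_cons_zero]; exact hd'
  · -- end
    show l.getD (n-1) (0,0) = (4 * 2 ^ k - 2, 1)
    have h5 : l.getLast? = l[l.length - 1]? := List.getLast?_eq_getElem?
    rw [lst] at h5
    rw [hn']
    rw [List.getD_eq_getElem?_getD, ← h5]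
    rfl
  · -- NNR property
    intro i hi y hyV hprev
    have hi1 : i + 1 < l.length := by omega
    have hi0 : i < l.length := by omega
    rw [hdfun]
    rw [hV] at hyV
    obtain ⟨j, hj, hyj⟩ := List.mem_iff_getElem.mp ((cov y).2 hyV)
    have hij : i < j := by
      by_contra hc
      push_neg at hc
      have hyy : l.getD j (0,0) = y := by
        rw [List.getD_eq_getElem l (0,0) (by omega)]; exact hyj
      exact hprev j hc hyy
    have hdrop : y ∈ l.drop (i+1) := by
      have h9 : (l.drop (i+1))[j - (i+1)]? = some y := by
        rw [List.getElem?_drop, show i + 1 + (j - (i+1)) = j by omega,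
          List.getElem?_eq_getElem hj, hyj]
      exact List.mem_of_getElem? h9
    have key := nnrl_get l (nnr ∅ (by simp)) i hi1 y hdrop
    show dcan (l.getD i (0,0)) (l.getD (i+1) (0,0)) ≤ dcan (l.getD i (0,0)) y
    rw [List.getD_eq_getElem l (0,0) hi0, List.getD_eq_getElem l (0,0) hi1]
    exact dcan_le_dcan key
  · -- total length
    rw [hdfun, hn']
    show ∑ i ∈ Finset.range (l.length - 1), dcan (l.getD i (0,0)) (l.getD (i+1) (0,0)) = _
    rw [sum_tourLen l (by intro hc; rw [hc] at hlen10; simp at hlen10)]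
    exact tlen
end

section
/- Let k ≥ 0 and let V_k = {(x,y) ∈ ℤ² : 0 ≤ x ≤ 8·2^k − 4, y ∈ {0,1}}, with n = 16·2^k − 6 points. Let G be the simple graph on V_k whose edges join pairs of points at rectilinear distance 1, and let d be the shortest-path (graph) metric of G. Then there exists an enumeration x₀, x₁, …, x_{n−1} of all points of V_k with x₀ = (0,0) and x_{n−1} = (4·2^k − 2, 1) such that for every i < n−1 and every point y ∈ V_k not among x₀,…,x_i one has d(x_i, x_{i+1}) ≤ d(x_i, y), and Σ_{i<n−1} d(x_i, x_{i+1}) = (12 + 4k)·2^k − 3. -/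
def d1 (p q : ℤ × ℤ) : ℤ := |p.1 - q.1| + |p.2 - q.2|

lemma d1_nonneg (p q : ℤ × ℤ) : 0 ≤ d1 p q := by
  simp only [d1, Int.abs_eq_natAbs]; omega

lemma one_le_d1 {p q : ℤ × ℤ} (h : p ≠ q) : 1 ≤ d1 p q := by
  rcases p with ⟨a,b⟩; rcases q with ⟨c,e⟩
  have : a ≠ c ∨ b ≠ e := by
    by_contra hc; push_neg at hc; exact h (by simp [hc.1, hc.2])
  simp only [d1, Int.abs_eq_natAbs]; omega

lemma le_d1_left {p q : ℤ × ℤ} {c : ℤ} (h : q.1 ≤ p.1 - c) : c ≤ d1 p q := by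
  simp only [d1, Int.abs_eq_natAbs] at *; omega

lemma le_d1_right {p q : ℤ × ℤ} {c : ℤ} (h : p.1 + c ≤ q.1) : c ≤ d1 p q := by
  simp only [d1, Int.abs_eq_natAbs] at *; omega

def shift (t : ℤ) (p : ℤ × ℤ) : ℤ × ℤ := (p.1 + t, p.2)

lemma shift_injective (t : ℤ) : Function.Injective (shift t) := by
  intro p q h
  simp only [shift, Prod.ext_iff] at h ⊢
  exact ⟨by omega, h.2⟩

lemma d1_shift (t : ℤ) (p q : ℤ × ℤ) : d1 (shift t p) (shift t q) = d1 p q := by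
  simp only [d1, shift]; ring_nf

lemma mem_map_shift {t : ℤ} {p : ℤ × ℤ} {l : List (ℤ × ℤ)} :
    p ∈ l.map (shift t) ↔ (p.1 - t, p.2) ∈ l := by
  simp only [List.mem_map, shift]
  constructor
  · rintro ⟨q, hq, rfl⟩; simpa using hq
  · intro h; exact ⟨_, h, by simp⟩

/-- the tour -/
def tourL : ℕ → List (ℤ × ℤ)
  | 0 => [(0,0),(0,1),(1,1),(1,0),(2,0),(3,0),(4,0),(4,1),(3,1),(2,1)]
  | (k+1) =>
    tourL k ++ ([((8*2^k-3 : ℤ),1),((8*2^k-3:ℤ),0),((8*2^k-2:ℤ),0),((8*2^k-1:ℤ),0)]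
      ++ (((tourL k).map (shift (8*2^k))) ++ [((8*2^k-1 : ℤ),1),((8*2^k-2:ℤ),1)]))

/-- nearest-neighbor property with external candidate set E -/
def nn (E : Set (ℤ × ℤ)) : List (ℤ × ℤ) → Prop
  | [] => True
  | [_] => True
  | a :: b :: l => (∀ y, (y ∈ b :: l ∨ y ∈ E) → d1 a b ≤ d1 a y) ∧ nn E (b :: l)

def pathLen : List (ℤ × ℤ) → ℤ
  | [] => 0
  | [_] => 0
  | a :: b :: l => d1 a b + pathLen (b :: l)

lemma nn_mono {E E' : Set (ℤ × ℤ)} (h : E ⊆ E') : ∀ {l : List (ℤ × ℤ)}, nn E' l → nn E l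
  | [] => fun _ => trivial
  | [_] => fun _ => trivial
  | a :: b :: l => fun ⟨h1, h2⟩ =>
      ⟨fun y hy => h1 y (by tauto), nn_mono h h2⟩

lemma nn_append {E : Set (ℤ × ℤ)} : ∀ {l₁ l₂ : List (ℤ × ℤ)},
    nn (E ∪ {y | y ∈ l₂}) l₁ → nn E l₂ →
    (∀ a b, l₁.getLast? = some a → l₂.head? = some b →
      ∀ y, (y ∈ l₂ ∨ y ∈ E) → d1 a b ≤ d1 a y) →
    nn E (l₁ ++ l₂)
  | [], l₂, _, h₂, _ => by simpa using h₂
  | [a], l₂, _, h₂, hb => by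
      cases l₂ with
      | nil => rw [List.append_nil]; exact (trivial : nn E [a])
      | cons b l₂ =>
        exact ⟨fun y hy => hb a b rfl rfl y hy, h₂⟩
  | a :: a' :: l₁, l₂, h₁, h₂, hb => by
      refine ⟨fun y hy => h₁.1 y ?_, ?_⟩
      · rcases hy with hy | hy
        · have h' : y = a' ∨ y ∈ l₁ ∨ y ∈ l₂ := by
            simpa using hy
          rcases h' with rfl | hy' | hy'
          · exact Or.inl (List.mem_cons_self)
          · exact Or.inl (List.mem_cons_of_mem _ hy')
          · exact Or.inr (Or.inr hy')
        · exact Or.inr (Or.inl hy)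
      · exact nn_append h₁.2 h₂ (fun c b hc hbb => hb c b (by
          rw [List.getLast?_cons_cons]; exact hc) hbb)

lemma nn_index {E : Set (ℤ × ℤ)} {z : ℤ × ℤ} :
    ∀ {l : List (ℤ × ℤ)}, nn E l → ∀ i, i + 1 < l.length →
      ∀ y, (y ∈ l.drop (i+1) ∨ y ∈ E) →
        d1 (l.getD i z) (l.getD (i+1) z) ≤ d1 (l.getD i z) y
  | [], _, i, hi => by simp at hi
  | [a], _, i, hi => by simp at hi
  | a :: b :: l, h, 0, hi => fun y hy => by
      simpa using h.1 y (by simpa using hy)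
  | a :: b :: l, h, (i+1), hi => fun y hy => by
      have H := nn_index (z := z) h.2 i (by simp at hi ⊢; omega) y (by simpa using hy)
      simpa using H

lemma nn_map_shift {E : Set (ℤ × ℤ)} (t : ℤ) :
    ∀ {l : List (ℤ × ℤ)}, nn E l →
      nn {y | (y.1 - t, y.2) ∈ E} (l.map (shift t))
  | [] => fun _ => trivial
  | [a] => fun _ => trivial
  | a :: b :: l => fun ⟨h1, h2⟩ => by
      refine ⟨fun y hy => ?_, nn_map_shift t h2⟩
      have hy' : (y.1 - t, y.2) ∈ b :: l ∨ ((y.1 - t, y.2) : ℤ × ℤ) ∈ E := by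
        rcases hy with hy | hy
        · left
          have : y ∈ (b :: l).map (shift t) := by simpa using hy
          exact mem_map_shift.1 this
        · right; exact hy
      have := h1 _ hy'
      have hyy : y = shift t (y.1 - t, y.2) := by simp [shift]
      calc d1 (shift t a) (shift t b) = d1 a b := d1_shift t a b
        _ ≤ d1 a (y.1 - t, y.2) := this
        _ = d1 (shift t a) (shift t (y.1 - t, y.2)) := (d1_shift t _ _).symm
        _ = d1 (shift t a) y := by rw [← hyy]

lemma nn_unit {E : Set (ℤ × ℤ)} :
    ∀ {l : List (ℤ × ℤ)}, List.Chain' (fun a b => d1 a b = 1) l → l.Nodup →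
      (∀ a ∈ l, a ∉ E) → nn E l
  | [] => fun _ _ _ => trivial
  | [a] => fun _ _ _ => trivial
  | a :: b :: l => fun hc hn hE => by
      rw [List.Chain', List.isChain_cons_cons] at hc
      refine ⟨fun y hy => ?_, nn_unit hc.2 hn.of_cons (fun x hx => hE x (List.mem_cons_of_mem _ hx))⟩
      rw [hc.1]
      refine one_le_d1 (fun h => ?_)
      rcases hy with hy | hy
      · rw [List.nodup_cons] at hn; exact hn.1 (h ▸ hy)
      · exact hE a (List.mem_cons_self) (h ▸ hy)

lemma pathLen_cons_cons (a b : ℤ × ℤ) (l : List (ℤ × ℤ)) :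
    pathLen (a :: b :: l) = d1 a b + pathLen (b :: l) := rfl

lemma pathLen_append : ∀ (l₁ : List (ℤ × ℤ)) (a b : ℤ × ℤ) (l₂ : List (ℤ × ℤ)),
    pathLen ((l₁ ++ [a]) ++ (b :: l₂)) = pathLen (l₁ ++ [a]) + d1 a b + pathLen (b :: l₂)
  | [], a, b, l₂ => by simp [pathLen]
  | [c], a, b, l₂ => by simp [pathLen]; ring
  | c :: e :: l₁, a, b, l₂ => by
      have h1 : ((c :: e :: l₁) ++ [a]) ++ (b :: l₂)
          = c :: (((e :: l₁) ++ [a]) ++ (b :: l₂)) := by simp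
      have h2 : ((e :: l₁) ++ [a]) ++ (b :: l₂) = e :: ((l₁ ++ [a]) ++ (b :: l₂)) := by simp
      rw [h1, h2, pathLen_cons_cons]
      have h3 : e :: ((l₁ ++ [a]) ++ (b :: l₂)) = ((e :: l₁) ++ [a]) ++ (b :: l₂) := h2.symm
      rw [h3, pathLen_append (e :: l₁) a b l₂]
      have h4 : (c :: e :: l₁) ++ [a] = c :: e :: (l₁ ++ [a]) := by simp
      rw [h4, pathLen_cons_cons]
      have h5 : e :: (l₁ ++ [a]) = (e :: l₁) ++ [a] := by simp
      rw [h5]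
      ring

lemma pathLen_append' (l : List (ℤ × ℤ)) (hl : l ≠ []) (b : ℤ × ℤ) (l₂ : List (ℤ × ℤ)) :
    pathLen (l ++ (b :: l₂)) = pathLen l + d1 (l.getLast hl) b + pathLen (b :: l₂) := by
  conv_lhs => rw [← List.dropLast_append_getLast hl]
  rw [pathLen_append, List.dropLast_append_getLast hl]

lemma pathLen_map_shift (t : ℤ) : ∀ (l : List (ℤ × ℤ)),
    pathLen (l.map (shift t)) = pathLen l
  | [] => rfl
  | [a] => rfl
  | a :: b :: l => by
      have : (a :: b :: l).map (shift t) = shift t a :: shift t b :: l.map (shift t) := rfl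
      rw [this, pathLen_cons_cons, pathLen_cons_cons, d1_shift]
      have := pathLen_map_shift t (b :: l)
      simp only [List.map_cons] at this
      rw [this]

lemma pathLen_eq_sum (z : ℤ × ℤ) : ∀ (l : List (ℤ × ℤ)),
    pathLen l = ∑ i ∈ Finset.range (l.length - 1), d1 (l.getD i z) (l.getD (i+1) z)
  | [] => by simp [pathLen]
  | [a] => by simp [pathLen]
  | a :: b :: l => by
      have hlen : (a :: b :: l).length - 1 = (b :: l).length - 1 + 1 := by
        simp
      rw [pathLen_cons_cons, hlen, Finset.sum_range_succ', pathLen_eq_sum z (b :: l)]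
      simp only [List.getD_cons_succ, List.getD_cons_zero]
      try ring

lemma pathLen_append'' {l : List (ℤ × ℤ)} {a : ℤ × ℤ} (ha : l.getLast? = some a)
    (b : ℤ × ℤ) (l₂ : List (ℤ × ℤ)) :
    pathLen (l ++ (b :: l₂)) = pathLen l + d1 a b + pathLen (b :: l₂) := by
  have hl : l ≠ [] := by rintro rfl; simp at ha
  have h2 : l.getLast hl = a := by
    rw [List.getLast?_eq_getLast hl] at ha; exact Option.some.inj ha
  rw [pathLen_append' l hl b l₂, h2]

def Ek (k : ℕ) : Set (ℤ × ℤ) := {y | y.1 < 0 ∨ 8 * 2 ^ k - 3 ≤ y.1}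

theorem tour_main : ∀ k : ℕ,
    (tourL k).length = 16 * 2 ^ k - 6 ∧
    (∀ p : ℤ × ℤ, p ∈ tourL k ↔ (0 ≤ p.1 ∧ p.1 ≤ 8 * 2 ^ k - 4 ∧ (p.2 = 0 ∨ p.2 = 1))) ∧
    (tourL k).Nodup ∧
    (tourL k).head? = some (0, 0) ∧
    (tourL k).getLast? = some (4 * 2 ^ k - 2, 1) ∧
    nn (Ek k) (tourL k) ∧
    pathLen (tourL k) = (12 + 4 * (k : ℤ)) * 2 ^ k - 3 := by
  intro k
  induction k with
  | zero =>
    refine ⟨by decide, ?_, by decide, by decide, by decide, ?_, by decide⟩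
    · intro p
      simp only [tourL, List.mem_cons, List.not_mem_nil, or_false, Prod.ext_iff, pow_zero]
      omega
    · apply nn_unit
      · norm_num [tourL, List.Chain', List.isChain_cons_cons, d1]
      · decide
      · intro a ha
        simp only [tourL, List.mem_cons, List.not_mem_nil, or_false] at ha
        simp only [Ek, Set.mem_setOf_eq, not_or, not_lt, not_le]
        rcases ha with rfl|rfl|rfl|rfl|rfl|rfl|rfl|rfl|rfl|rfl <;> norm_num
  | succ k ih =>
    obtain ⟨ihlen, ihcov, ihnodup, ihhead, ihlast, ihnn, ihpath⟩ := ih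
    have h0 : (0:ℤ) < 2 ^ k := by positivity
    have h1 : (1:ℤ) ≤ 2 ^ k := by omega
    have hp2 : (2:ℤ) ^ (k+1) = 2 * 2 ^ k := by ring
    have hp2n : (2:ℕ) ^ (k+1) = 2 * 2 ^ k := by ring
    have h1n : (1:ℕ) ≤ 2 ^ k := Nat.one_le_two_pow
    -- abbreviations
    set S := (tourL k).map (shift (8*2^k)) with hS
    have hmemL : ∀ y ∈ tourL k, 0 ≤ y.1 ∧ y.1 ≤ 8*2^k-4 ∧ (y.2 = 0 ∨ y.2 = 1) :=
      fun y hy => (ihcov y).1 hy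
    have hmemS : ∀ y ∈ S, (8*2^k : ℤ) ≤ y.1 ∧ y.1 ≤ 16*2^k - 4 ∧ (y.2 = 0 ∨ y.2 = 1) := by
      intro y hy
      rw [hS, mem_map_shift] at hy
      have h := (ihcov _).1 hy
      simp only [Prod.fst, Prod.snd] at h
      constructor
      · omega
      constructor
      · omega
      · exact h.2.2
    have hSlast : S.getLast? = some ((4*2^k-2) + 8*2^k, (1:ℤ)) := by
      rw [hS, List.getLast?_map, ihlast, Option.map_some]
      rfl
    have hShead : S.head? = some ((0:ℤ) + 8*2^k, (0:ℤ)) := by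
      rw [hS, List.head?_map, ihhead, Option.map_some]
      rfl
    have hdef : tourL (k+1) = tourL k ++ ([((8*2^k-3 : ℤ),1),((8*2^k-3:ℤ),0),((8*2^k-2:ℤ),0),((8*2^k-1:ℤ),0)]
      ++ (S ++ [((8*2^k-1 : ℤ),1),((8*2^k-2:ℤ),1)])) := rfl
    refine ⟨?_, ?_, ?_, ?_, ?_, ?_, ?_⟩
    -- length
    · rw [hdef, hS]
      simp only [List.length_append, List.length_map, List.length_cons, List.length_nil, ihlen]
      omega
    -- coverage
    · intro p
      rw [hdef]
      simp only [List.mem_append, List.mem_cons, List.not_mem_nil, or_false, hS,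
        mem_map_shift, ihcov, Prod.ext_iff, Prod.fst, Prod.snd]
      omega
    -- nodup
    · rw [hdef, List.nodup_append', List.nodup_append', List.nodup_append']
      refine ⟨ihnodup, ⟨?_, ⟨ihnodup.map (shift_injective _), ?_, ?_⟩, ?_⟩, ?_⟩
      · -- mid4 nodup
        simp only [List.nodup_cons, List.mem_cons, List.not_mem_nil, or_false,
          List.nodup_nil, and_true, Prod.ext_iff, not_or]
        norm_num
      · -- tail2 nodup
        simp only [List.nodup_cons, List.mem_cons, List.not_mem_nil, or_false,
          List.nodup_nil, and_true, Prod.ext_iff, not_or]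
        norm_num
      · -- S disjoint tail2
        intro y hyS hyT
        have := hmemS y hyS
        simp only [List.mem_cons, List.not_mem_nil, or_false, Prod.ext_iff] at hyT
        omega
      · -- mid4 disjoint (S ++ tail2)
        intro y hyM hyR
        simp only [List.mem_cons, List.not_mem_nil, or_false, Prod.ext_iff] at hyM
        rcases List.mem_append.1 hyR with hyS | hyT
        · have := hmemS y hyS; omega
        · simp only [List.mem_cons, List.not_mem_nil, or_false, Prod.ext_iff] at hyT
          omega
      · -- L disjoint rest
        intro y hyL hyR
        have hy := hmemL y hyL
        rcases List.mem_append.1 hyR with hyM | hyR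
        · simp only [List.mem_cons, List.not_mem_nil, or_false, Prod.ext_iff] at hyM
          omega
        · rcases List.mem_append.1 hyR with hyS | hyT
          · have := hmemS y hyS; omega
          · simp only [List.mem_cons, List.not_mem_nil, or_false, Prod.ext_iff] at hyT
            omega
    -- head?
    · rw [hdef, List.head?_append, ihhead]
      rfl
    -- getLast?
    · rw [hdef, List.getLast?_append, List.getLast?_append, List.getLast?_append]
      have : ([((8*2^k-1 : ℤ),1),((8*2^k-2:ℤ),1)] : List (ℤ × ℤ)).getLast? = some ((8*2^k-2:ℤ),1) := rfl
      rw [this]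
      show some _ = _
      exact congrArg some (by rw [Prod.mk.injEq]; exact ⟨by ring, rfl⟩)
    -- nn
    · have htail2 : nn (Ek (k+1)) [((8*2^k-1 : ℤ),(1:ℤ)),((8*2^k-2:ℤ),(1:ℤ))] := by
        apply nn_unit
        · simp only [List.Chain', List.isChain_cons_cons, List.isChain_singleton, and_true]
          simp only [d1, Int.abs_eq_natAbs]
          omega
        · simp only [List.nodup_cons, List.mem_cons, List.not_mem_nil, or_false,
            List.nodup_nil, and_true, Prod.mk.injEq, not_false_eq_true]
          omega
        · intro a ha
          simp only [List.mem_cons, List.not_mem_nil, or_false] at ha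
          simp only [Ek, Set.mem_setOf_eq, not_or, not_lt, not_le]
          rcases ha with rfl | rfl <;> omega
      have hnnS2 : nn (Ek (k+1) ∪ {y | y ∈ [((8*2^k-1 : ℤ),(1:ℤ)),((8*2^k-2:ℤ),(1:ℤ))]}) S := by
        refine nn_mono ?_ (nn_map_shift (8*2^k) ihnn)
        rintro y (hy | hy)
        · simp only [Ek, Set.mem_setOf_eq] at hy ⊢
          omega
        · simp only [Set.mem_setOf_eq, List.mem_cons, List.not_mem_nil, or_false] at hy
          simp only [Ek, Set.mem_setOf_eq]
          rcases hy with rfl | rfl <;> omega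
      have hnnStail : nn (Ek (k+1)) (S ++ [((8*2^k-1 : ℤ),(1:ℤ)),((8*2^k-2:ℤ),(1:ℤ))]) := by
        refine nn_append hnnS2 htail2 ?_
        intro a b ha hb y hy
        rw [hSlast] at ha
        have ha' : a = ((4*2^k-2) + 8*2^k, (1:ℤ)) := (Option.some.inj ha).symm
        have hb' : b = ((8*2^k-1 : ℤ),(1:ℤ)) := (Option.some.inj hb).symm
        subst ha'
        subst hb'
        have hab : d1 ((4*2^k-2) + 8*2^k, (1:ℤ)) ((8*2^k-1 : ℤ),(1:ℤ)) = 4*2^k - 1 := by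
          simp only [d1, Int.abs_eq_natAbs]
          omega
        rw [hab]
        rcases hy with hy | hy
        · simp only [List.mem_cons, List.not_mem_nil, or_false] at hy
          rcases hy with rfl | rfl
          · rw [← hab]
          · apply le_d1_left
            omega
        · simp only [Ek, Set.mem_setOf_eq] at hy
          rcases hy with hy | hy
          · apply le_d1_left
            omega
          · apply le_d1_right
            omega
      have hmid : nn (Ek (k+1) ∪ {y | y ∈ (S ++ [((8*2^k-1 : ℤ),(1:ℤ)),((8*2^k-2:ℤ),(1:ℤ))])})
          [((8*2^k-3 : ℤ),(1:ℤ)),((8*2^k-3:ℤ),(0:ℤ)),((8*2^k-2:ℤ),(0:ℤ)),((8*2^k-1:ℤ),(0:ℤ))] := by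
        apply nn_unit
        · simp only [List.Chain', List.isChain_cons_cons, List.isChain_singleton, and_true]
          refine ⟨?_, ?_, ?_⟩ <;> (simp only [d1, Int.abs_eq_natAbs]; omega)
        · simp only [List.nodup_cons, List.mem_cons, List.not_mem_nil, or_false,
            List.nodup_nil, and_true, Prod.mk.injEq, not_false_eq_true]
          omega
        · intro a ha hmem
          simp only [List.mem_cons, List.not_mem_nil, or_false] at ha
          rcases hmem with hmem | hmem
          · simp only [Ek, Set.mem_setOf_eq] at hmem
            rcases ha with rfl|rfl|rfl|rfl <;> omega
          · simp only [Set.mem_setOf_eq, List.mem_append, List.mem_cons, List.not_mem_nil,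
              or_false] at hmem
            rcases hmem with hyS | (h'|h')
            · have := hmemS a hyS
              rcases ha with rfl|rfl|rfl|rfl <;> omega
            · rcases ha with rfl|rfl|rfl|rfl <;> (simp only [Prod.mk.injEq] at h'; omega)
            · rcases ha with rfl|rfl|rfl|rfl <;> (simp only [Prod.mk.injEq] at h'; omega)
      have hR : nn (Ek (k+1)) (([((8*2^k-3 : ℤ),(1:ℤ)),((8*2^k-3:ℤ),(0:ℤ)),((8*2^k-2:ℤ),(0:ℤ)),((8*2^k-1:ℤ),(0:ℤ))] : List (ℤ × ℤ))
          ++ (S ++ [((8*2^k-1 : ℤ),(1:ℤ)),((8*2^k-2:ℤ),(1:ℤ))])) := by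
        refine nn_append hmid hnnStail ?_
        intro a b ha hb y hy
        have ha' : a = ((8*2^k-1:ℤ),(0:ℤ)) := by
          rw [show ([((8*2^k-3 : ℤ),(1:ℤ)),((8*2^k-3:ℤ),(0:ℤ)),((8*2^k-2:ℤ),(0:ℤ)),((8*2^k-1:ℤ),(0:ℤ))] : List (ℤ × ℤ)).getLast?
              = some ((8*2^k-1:ℤ),(0:ℤ)) from rfl] at ha
          exact (Option.some.inj ha).symm
        have hb0 : (S ++ [((8*2^k-1 : ℤ),(1:ℤ)),((8*2^k-2:ℤ),(1:ℤ))]).head? = some ((0:ℤ) + 8*2^k, (0:ℤ)) := by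
          rw [List.head?_append, hShead]
          rfl
        rw [hb0] at hb
        have hb' : b = ((0:ℤ) + 8*2^k, (0:ℤ)) := (Option.some.inj hb).symm
        subst ha'
        subst hb'
        have hab : d1 ((8*2^k-1:ℤ),(0:ℤ)) ((0:ℤ) + 8*2^k, (0:ℤ)) = 1 := by
          simp only [d1, Int.abs_eq_natAbs]
          omega
        rw [hab]
        rcases hy with hy | hy
        · rcases List.mem_append.1 hy with hyS | hyT
          · have := hmemS y hyS
            apply le_d1_right
            omega
          · simp only [List.mem_cons, List.not_mem_nil, or_false] at hyT
            rcases hyT with rfl | rfl <;> (simp only [d1, Int.abs_eq_natAbs]; omega)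
        · simp only [Ek, Set.mem_setOf_eq] at hy
          rcases hy with hy | hy
          · apply le_d1_left
            omega
          · apply le_d1_right
            omega
      rw [hdef]
      refine nn_append ?_ hR ?_
      · refine nn_mono ?_ ihnn
        rintro y (hy | hy)
        · simp only [Ek, Set.mem_setOf_eq] at hy ⊢
          omega
        · simp only [Set.mem_setOf_eq, List.mem_append, List.mem_cons, List.not_mem_nil,
            or_false] at hy
          simp only [Ek, Set.mem_setOf_eq]
          rcases hy with (rfl|rfl|rfl|rfl) | hyS | (rfl|rfl)
          · omega
          · omega
          · omega
          · omega
          · have := hmemS y hyS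
            omega
          · omega
          · omega
      · intro a b ha hb y hy
        rw [ihlast] at ha
        have ha' : a = ((4*2^k-2:ℤ),(1:ℤ)) := (Option.some.inj ha).symm
        have hb' : b = ((8*2^k-3:ℤ),(1:ℤ)) := by
          rw [show (([((8*2^k-3 : ℤ),(1:ℤ)),((8*2^k-3:ℤ),(0:ℤ)),((8*2^k-2:ℤ),(0:ℤ)),((8*2^k-1:ℤ),(0:ℤ))] : List (ℤ × ℤ))
              ++ (S ++ [((8*2^k-1 : ℤ),(1:ℤ)),((8*2^k-2:ℤ),(1:ℤ))])).head? = some ((8*2^k-3:ℤ),(1:ℤ)) from rfl] at hb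
          exact (Option.some.inj hb).symm
        subst ha'
        subst hb'
        have hab : d1 ((4*2^k-2:ℤ),(1:ℤ)) ((8*2^k-3:ℤ),(1:ℤ)) = 4*2^k - 1 := by
          simp only [d1, Int.abs_eq_natAbs]
          omega
        rw [hab]
        rcases hy with hy | hy
        · rcases List.mem_append.1 hy with hyM | hy2
          · simp only [List.mem_cons, List.not_mem_nil, or_false] at hyM
            rcases hyM with rfl|rfl|rfl|rfl <;> (apply le_d1_right; omega)
          · rcases List.mem_append.1 hy2 with hyS | hyT
            · have := hmemS y hyS
              apply le_d1_right
              omega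
            · simp only [List.mem_cons, List.not_mem_nil, or_false] at hyT
              rcases hyT with rfl | rfl <;> (apply le_d1_right; omega)
        · simp only [Ek, Set.mem_setOf_eq] at hy
          rcases hy with hy | hy
          · apply le_d1_left
            omega
          · apply le_d1_right
            omega
    -- pathLen
    · rw [hdef]
      have e1 : (([((8*2^k-3 : ℤ),1),((8*2^k-3:ℤ),0),((8*2^k-2:ℤ),0),((8*2^k-1:ℤ),0)] : List (ℤ × ℤ))
          ++ (S ++ [((8*2^k-1 : ℤ),1),((8*2^k-2:ℤ),1)]))
          = ((8*2^k-3 : ℤ),(1:ℤ)) :: (((8*2^k-3:ℤ),(0:ℤ)) :: ((8*2^k-2:ℤ),(0:ℤ)) :: ((8*2^k-1:ℤ),(0:ℤ)) ::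
            (S ++ [((8*2^k-1 : ℤ),1),((8*2^k-2:ℤ),1)])) := rfl
      rw [e1, pathLen_append'' ihlast, pathLen_cons_cons, pathLen_cons_cons, pathLen_cons_cons]
      obtain ⟨L', hL'⟩ : ∃ L', tourL k = (0,0) :: L' := by
        cases h : tourL k with
        | nil => rw [h] at ihhead; simp at ihhead
        | cons a l =>
          rw [h] at ihhead
          simp only [List.head?_cons, Option.some.injEq] at ihhead
          exact ⟨l, by rw [ihhead]⟩
      have e2 : (((8*2^k-1:ℤ),(0:ℤ)) :: (S ++ [((8*2^k-1 : ℤ),1),((8*2^k-2:ℤ),1)]))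
          = ((8*2^k-1:ℤ),(0:ℤ)) :: ((0+8*2^k:ℤ),(0:ℤ)) :: ((L'.map (shift (8*2^k))) ++ [((8*2^k-1 : ℤ),1),((8*2^k-2:ℤ),1)]) := by
        rw [hS, hL']
        rfl
      rw [e2, pathLen_cons_cons]
      have e3 : (((0+8*2^k:ℤ),(0:ℤ)) :: ((L'.map (shift (8*2^k))) ++ [((8*2^k-1 : ℤ),1),((8*2^k-2:ℤ),1)]))
          = (S ++ [((8*2^k-1 : ℤ),1),((8*2^k-2:ℤ),1)]) := by
        rw [hS, hL']
        rfl
      rw [e3, pathLen_append'' hSlast]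
      have e4 : pathLen S = pathLen (tourL k) := by
        rw [hS, pathLen_map_shift]
      rw [e4, ihpath]
      have e5 : pathLen [((8*2^k-1 : ℤ),(1:ℤ)),((8*2^k-2:ℤ),(1:ℤ))]
          = d1 ((8*2^k-1 : ℤ),(1:ℤ)) ((8*2^k-2:ℤ),(1:ℤ)) := by
        rw [pathLen_cons_cons, show pathLen [((8*2^k-2:ℤ),(1:ℤ))] = 0 from rfl, add_zero]
      rw [e5]
      have hd1 : d1 ((4*2^k-2:ℤ),(1:ℤ)) ((8*2^k-3:ℤ),(1:ℤ)) = 4*2^k - 1 := by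
        simp only [d1, Int.abs_eq_natAbs]; omega
      have hd2 : d1 ((8*2^k-3 : ℤ),(1:ℤ)) ((8*2^k-3:ℤ),(0:ℤ)) = 1 := by
        simp only [d1, Int.abs_eq_natAbs]; omega
      have hd3 : d1 ((8*2^k-3:ℤ),(0:ℤ)) ((8*2^k-2:ℤ),(0:ℤ)) = 1 := by
        simp only [d1, Int.abs_eq_natAbs]; omega
      have hd4 : d1 ((8*2^k-2:ℤ),(0:ℤ)) ((8*2^k-1:ℤ),(0:ℤ)) = 1 := by
        simp only [d1, Int.abs_eq_natAbs]; omega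
      have hd5 : d1 ((8*2^k-1:ℤ),(0:ℤ)) ((0+8*2^k:ℤ),(0:ℤ)) = 1 := by
        simp only [d1, Int.abs_eq_natAbs]; omega
      have hd6 : d1 ((4*2^k-2) + 8*2^k, (1:ℤ)) ((8*2^k-1 : ℤ),(1:ℤ)) = 4*2^k - 1 := by
        simp only [d1, Int.abs_eq_natAbs]; omega
      have hd7 : d1 ((8*2^k-1 : ℤ),(1:ℤ)) ((8*2^k-2:ℤ),(1:ℤ)) = 1 := by
        simp only [d1, Int.abs_eq_natAbs]; omega
      rw [hd1, hd2, hd3, hd4, hd5, hd6, hd7]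
      push_cast
      ring

section distlemma

variable {k : ℕ} {V : Set (ℤ × ℤ)}
  (hV : V = {p : ℤ × ℤ | 0 ≤ p.1 ∧ p.1 ≤ 8 * 2 ^ k - 4 ∧ (p.2 = 0 ∨ p.2 = 1)})
  {G : SimpleGraph V}
  (hG : ∀ p q : V, G.Adj p q ↔
      |(p : ℤ × ℤ).1 - (q : ℤ × ℤ).1| + |(p : ℤ × ℤ).2 - (q : ℤ × ℤ).2| = 1)

include hV hG

lemma exists_walk_d1 (p q : V) :
    ∃ w : G.Walk p q, (w.length : ℤ) = d1 p.1 q.1 := by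
  -- strong induction on (d1 p q).toNat
  generalize hN : (d1 p.1 q.1).toNat = N
  induction N using Nat.strong_induction_on generalizing p q with
  | _ N ih =>
    by_cases hpq : p = q
    · subst hpq
      have : d1 p.1 p.1 = 0 := by simp [d1]
      exact ⟨SimpleGraph.Walk.nil, by simp [this]⟩
    · -- find a neighbor r with d1 r q = d1 p q - 1
      have hne : (p : ℤ × ℤ) ≠ (q : ℤ × ℤ) := fun h => hpq (Subtype.ext h)
      obtain ⟨⟨a, b⟩, hp⟩ := p
      obtain ⟨⟨c, e⟩, hq⟩ := q
      have hN' : (d1 (a, b) (c, e)).toNat = N := hN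
      have hne' : ((a, b) : ℤ × ℤ) ≠ (c, e) := hne
      have hp' := hV ▸ hp
      have hq' := hV ▸ hq
      simp only [Set.mem_setOf_eq] at hp' hq'
      have key : ∃ r : ℤ × ℤ, (0 ≤ r.1 ∧ r.1 ≤ 8 * 2 ^ k - 4 ∧ (r.2 = 0 ∨ r.2 = 1))
          ∧ |a - r.1| + |b - r.2| = 1 ∧ d1 r (c, e) + 1 = d1 (a, b) (c, e) := by
        rcases lt_trichotomy a c with h | h | h
        · refine ⟨(a+1, b), ⟨by omega, by omega, hp'.2.2⟩, by simp, ?_⟩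
          simp only [d1, Int.abs_eq_natAbs]; omega
        · have hbe : b ≠ e := by
            intro hbe; exact hne' (by simp [h, hbe])
          refine ⟨(a, e), ⟨hp'.1, hp'.2.1, hq'.2.2⟩, ?_, ?_⟩
          · simp only [Int.abs_eq_natAbs]
            rcases hp'.2.2 with h1 | h1 <;> rcases hq'.2.2 with h2 | h2 <;>
              simp [h1, h2] at hbe ⊢ <;> omega
          · simp only [d1, Int.abs_eq_natAbs, h]; omega
        · refine ⟨(a-1, b), ⟨by omega, by omega, hp'.2.2⟩, by simp, ?_⟩
          simp only [d1, Int.abs_eq_natAbs]; omega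
      obtain ⟨r, hrV, hadj, hd⟩ := key
      have hrV' : r ∈ V := by rw [hV]; exact hrV
      have hadj' : G.Adj ⟨(a,b), hp⟩ ⟨r, hrV'⟩ := (hG _ _).2 hadj
      have h0 : 0 ≤ d1 r (c,e) := d1_nonneg _ _
      have h1 : 0 ≤ d1 (a,b) (c,e) := d1_nonneg _ _
      have hlt : (d1 r (c,e)).toNat < N := by omega
      obtain ⟨w, hw⟩ := ih _ hlt ⟨r, hrV'⟩ ⟨(c,e), hq⟩ rfl
      refine ⟨SimpleGraph.Walk.cons hadj' w, ?_⟩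
      have hw' : (w.length : ℤ) = d1 r (c,e) := hw
      simp only [SimpleGraph.Walk.length_cons]
      push_cast
      omega

lemma d1_le_walk (p q : V) (w : G.Walk p q) : d1 p.1 q.1 ≤ (w.length : ℤ) := by
  induction w with
  | nil => simp [d1]
  | @cons u v x hadj w ih =>
    have h1 : d1 u.1 v.1 = 1 := (hG _ _).1 hadj
    have htri : d1 u.1 x.1 ≤ d1 u.1 v.1 + d1 v.1 x.1 := by
      simp only [d1, Int.abs_eq_natAbs]; omega
    simp only [SimpleGraph.Walk.length_cons]
    push_cast
    omega

lemma dist_eq_d1 (p q : V) : (G.dist p q : ℤ) = d1 p.1 q.1 := by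
  obtain ⟨w, hw⟩ := exists_walk_d1 hV hG p q
  have hub : G.dist p q ≤ w.length := SimpleGraph.dist_le w
  have hreach : G.Reachable p q := ⟨w⟩
  obtain ⟨w', hw'⟩ := hreach.exists_walk_length_eq_dist
  have hlb := d1_le_walk hV hG p q w'
  rw [hw'] at hlb
  have := d1_nonneg p.1 q.1
  omega

end distlemma


/-- On the `2 × (8·2^k − 3)` grid `V_k` with the shortest-path metric of the
grid graph (edges between points at rectilinear distance 1), there is a partial
nearest-neighbor tour through all of `V_k` starting at `(0,0)`, ending at
`(4·2^k − 2, 1)`, of total length `(12 + 4k)·2^k − 3`. -/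
theorem nnr_partial_tour_graphic (k : ℕ) (n : ℕ) (hn : n = 16 * 2 ^ k - 6)
    (V : Set (ℤ × ℤ))
    (hV : V = {p : ℤ × ℤ | 0 ≤ p.1 ∧ p.1 ≤ 8 * 2 ^ k - 4 ∧ (p.2 = 0 ∨ p.2 = 1)})
    (G : SimpleGraph V)
    (hG : ∀ p q : V, G.Adj p q ↔
      |(p : ℤ × ℤ).1 - (q : ℤ × ℤ).1| + |(p : ℤ × ℤ).2 - (q : ℤ × ℤ).2| = 1)
    (d : V → V → ℕ) (hd : ∀ p q : V, d p q = G.dist p q) :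
    ∃ x : ℕ → V,
      (∀ i < n, ∀ j < n, x i = x j → i = j) ∧
      (∀ p : V, ∃ i < n, x i = p) ∧
      (x 0 : ℤ × ℤ) = (0, 0) ∧
      (x (n - 1) : ℤ × ℤ) = (4 * 2 ^ k - 2, 1) ∧
      (∀ i < n - 1, ∀ y : V, (∀ j ≤ i, x j ≠ y) →
        d (x i) (x (i + 1)) ≤ d (x i) y) ∧
      ∑ i ∈ Finset.range (n - 1), d (x i) (x (i + 1))
        = (12 + 4 * k) * 2 ^ k - 3 := by
  have h0 : (0:ℤ) < 2 ^ k := by positivity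
  have h1 : (1:ℤ) ≤ 2 ^ k := by omega
  have h1n : (1:ℕ) ≤ 2 ^ k := Nat.one_le_two_pow
  obtain ⟨hlen, hcov, hnodup, hhead, hlast, hnn, hpath⟩ := tour_main k
  have hnl : (tourL k).length = n := by rw [hn, hlen]
  have hn10 : 10 ≤ n := by
    rw [hn]
    have : 16 * 1 ≤ 16 * 2 ^ k := Nat.mul_le_mul_left 16 h1n
    omega
  have hdist : ∀ p q : V, (d p q : ℤ) = d1 p.1 q.1 := fun p q => by
    rw [hd]; exact dist_eq_d1 hV hG p q
  have hV' : ∀ q : ℤ × ℤ, q ∈ V ↔ (0 ≤ q.1 ∧ q.1 ≤ 8 * 2 ^ k - 4 ∧ (q.2 = 0 ∨ q.2 = 1)) := by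
    intro q
    rw [hV]
    rfl
  have h00 : ((0,0) : ℤ × ℤ) ∈ V := by
    rw [hV]
    refine ⟨le_refl 0, by simp; omega, Or.inl rfl⟩
  have hmemV : ∀ p ∈ tourL k, p ∈ V := by
    intro p hp
    have h := (hcov p).1 hp
    rw [hV]
    exact ⟨h.1, h.2.1, h.2.2⟩
  have hgetmem : ∀ i, (tourL k).getD i (0,0) ∈ V := by
    intro i
    by_cases hi : i < (tourL k).length
    · refine hmemV _ ?_
      rw [List.getD_eq_getElem _ _ hi]
      exact List.getElem_mem hi
    · rw [List.getD_eq_default _ _ (le_of_not_gt hi)]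
      exact h00
  refine ⟨fun i => ⟨(tourL k).getD i (0,0), hgetmem i⟩, ?_, ?_, ?_, ?_, ?_, ?_⟩
  -- injectivity
  · intro i hi j hj hij
    have hi' : i < (tourL k).length := by omega
    have hj' : j < (tourL k).length := by omega
    have h2 : (tourL k).getD i (0,0) = (tourL k).getD j (0,0) := congrArg Subtype.val hij
    rw [List.getD_eq_getElem _ _ hi', List.getD_eq_getElem _ _ hj'] at h2
    have h3 : (tourL k).get ⟨i, hi'⟩ = (tourL k).get ⟨j, hj'⟩ := h2
    have h4 := (hnodup.get_inj_iff).1 h3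
    exact congrArg Fin.val h4
  -- surjectivity
  · intro p
    have hp : p.1 ∈ tourL k := (hcov p.1).2 ((hV' p.1).1 p.2)
    obtain ⟨i, hilen, hig⟩ := List.mem_iff_getElem.1 hp
    refine ⟨i, by omega, ?_⟩
    apply Subtype.ext
    show (tourL k).getD i (0,0) = p.1
    rw [List.getD_eq_getElem _ _ hilen]
    exact hig
  -- start
  · show (tourL k).getD 0 (0,0) = (0,0)
    cases h : tourL k with
    | nil => rw [h] at hhead; simp at hhead
    | cons a l =>
      rw [h] at hhead
      simp only [List.head?_cons, Option.some.injEq] at hhead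
      rw [List.getD_cons_zero, hhead]
  -- end
  · show (tourL k).getD (n-1) (0,0) = (4 * 2 ^ k - 2, 1)
    have hlt : n - 1 < (tourL k).length := by omega
    rw [List.getD_eq_getElem _ _ hlt]
    have h2 := (List.getLast?_eq_getElem? (l := tourL k)).symm.trans hlast
    rw [hnl] at h2
    rw [List.getElem?_eq_getElem hlt] at h2
    exact Option.some.inj h2
  -- nearest neighbor property
  · intro i hi y hy
    have hi1 : i + 1 < (tourL k).length := by omega
    have suff : d1 ((tourL k).getD i (0,0)) ((tourL k).getD (i+1) (0,0)) ≤
        d1 ((tourL k).getD i (0,0)) y.1 := by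
      apply nn_index hnn i hi1 y.1
      left
      have hpy : y.1 ∈ tourL k := (hcov y.1).2 ((hV' y.1).1 y.2)
      obtain ⟨j, hjlen, hjg⟩ := List.mem_iff_getElem.1 hpy
      have hij : i + 1 ≤ j := by
        by_contra hc
        push_neg at hc
        refine hy j (by omega) (Subtype.ext ?_)
        show (tourL k).getD j (0,0) = y.1
        rw [List.getD_eq_getElem _ _ hjlen]
        exact hjg
      have h4 := List.getElem?_drop (xs := tourL k) (i := i+1) (j := j - (i+1))
      rw [show (i+1) + (j-(i+1)) = j from by omega] at h4
      have h5 : (tourL k)[j]? = some ((tourL k)[j]) := List.getElem?_eq_getElem hjlen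
      rw [hjg] at h5
      exact List.mem_of_getElem? (h4.trans h5)
    have hc : (d (⟨(tourL k).getD i (0,0), hgetmem i⟩ : V) ⟨(tourL k).getD (i+1) (0,0), hgetmem (i+1)⟩ : ℤ)
        ≤ (d ⟨(tourL k).getD i (0,0), hgetmem i⟩ y : ℤ) := by
      rw [hdist, hdist]
      exact suff
    exact_mod_cast hc
  -- total length
  · have h3n : 3 ≤ (12 + 4*k) * 2^k := by
      have : 12 * 1 ≤ (12 + 4*k) * 2^k := Nat.mul_le_mul (by omega) h1n
      omega
    have hsum : ((∑ i ∈ Finset.range (n - 1),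
        d (⟨(tourL k).getD i (0,0), hgetmem i⟩ : V) ⟨(tourL k).getD (i+1) (0,0), hgetmem (i+1)⟩ : ℕ) : ℤ)
        = pathLen (tourL k) := by
      rw [Nat.cast_sum, pathLen_eq_sum ((0,0) : ℤ × ℤ) (tourL k), hnl]
      refine Finset.sum_congr rfl fun i _ => ?_
      exact hdist ⟨(tourL k).getD i (0,0), hgetmem i⟩ ⟨(tourL k).getD (i+1) (0,0), hgetmem (i+1)⟩
    rw [hpath] at hsum
    have hcast : (((12 + 4 * k) * 2 ^ k - 3 : ℕ) : ℤ) = (12 + 4 * (k:ℤ)) * 2 ^ k - 3 := by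
      rw [Nat.cast_sub h3n]
      push_cast
      ring
    have : ((∑ i ∈ Finset.range (n - 1),
        d (⟨(tourL k).getD i (0,0), hgetmem i⟩ : V) ⟨(tourL k).getD (i+1) (0,0), hgetmem (i+1)⟩ : ℕ) : ℤ)
        = (((12 + 4 * k) * 2 ^ k - 3 : ℕ) : ℤ) := by
      rw [hsum, hcast]
    exact_mod_cast this
end

section
/- Let k ≥ 0, let V_k = {(x,y) ∈ ℤ² : 0 ≤ x ≤ 8·2^k − 4, y ∈ {0,1}} with n = 16·2^k − 6 points, equipped with the rectilinear (L¹) distance d. Then there exists an NNR tour of V_k starting at (0,0) of total (closed-tour) length at least (12 + 4k)·2^k − 3, while every traveling salesman tour of V_k has length at least n and some tour has length exactly n. In particular the ratio of the length of this NNR tour to the optimum tour length is at least (log₂ n − 1)/4. -/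
namespace NNR7

def dZ (p q : ℤ × ℤ) : ℤ := ((p.1 - q.1).natAbs : ℤ) + ((p.2 - q.2).natAbs : ℤ)

lemma one_le_dZ {p q : ℤ × ℤ} (h : p ≠ q) : 1 ≤ dZ p q := by
  have h' : p.1 ≠ q.1 ∨ p.2 ≠ q.2 := by
    by_contra hc; push_neg at hc; exact h (Prod.ext hc.1 hc.2)
  simp only [dZ]; rcases h' with h1 | h1 <;> omega

lemma col_le_dZ (p q : ℤ × ℤ) : q.1 - p.1 ≤ dZ p q := by simp only [dZ]; omega

lemma dZ_tr (c : ℤ) (p q : ℤ × ℤ) :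
    dZ (p.1 + c, p.2) (q.1 + c, q.2) = dZ p q := by simp only [dZ]; omega

def fl (p : ℤ × ℤ) : ℤ × ℤ := (p.1, 1 - p.2)

lemma dZ_fl (p q : ℤ × ℤ) : dZ (fl p) (fl q) = dZ p q := by simp only [dZ, fl]; omega

noncomputable def gridF (w : ℤ) : Finset (ℤ × ℤ) := Finset.Icc 0 (w - 1) ×ˢ ({0, 1} : Finset ℤ)

lemma mem_gridF {w : ℤ} {p : ℤ × ℤ} :
    p ∈ gridF w ↔ 0 ≤ p.1 ∧ p.1 < w ∧ (p.2 = 0 ∨ p.2 = 1) := by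
  constructor
  · intro h
    rw [gridF, Finset.mem_product, Finset.mem_Icc] at h
    refine ⟨h.1.1, by omega, by simpa using h.2⟩
  · intro h
    rw [gridF, Finset.mem_product, Finset.mem_Icc]
    exact ⟨⟨h.1, by omega⟩, by simpa using h.2.2⟩

lemma card_gridF {w : ℤ} (hw : 0 ≤ w) : (gridF w).card = 2 * w.toNat := by
  rw [gridF, Finset.card_product, Int.card_Icc]
  have h2 : ({0, 1} : Finset ℤ).card = 2 := by decide
  rw [h2]
  omega

lemma cover_of {α : Type*} [DecidableEq α] {S : Finset α} {n : ℕ} {x : ℕ → α}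
    (hcard : S.card = n) (hmem : ∀ i < n, x i ∈ S)
    (hinj : ∀ i < n, ∀ j < n, x i = x j → i = j) :
    ∀ p ∈ S, ∃ i < n, x i = p := by
  have hsub : (Finset.range n).image x ⊆ S := by
    intro p hp
    simp only [Finset.mem_image, Finset.mem_range] at hp
    obtain ⟨i, hi, rfl⟩ := hp
    exact hmem i hi
  have hcardim : ((Finset.range n).image x).card = n := by
    rw [Finset.card_image_of_injOn, Finset.card_range]
    intro a ha b hb hab
    exact hinj a (Finset.mem_range.mp ha) b (Finset.mem_range.mp hb) hab
  have heq : (Finset.range n).image x = S :=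
    Finset.eq_of_subset_of_card_le hsub (by omega)
  intro p hp
  rw [← heq] at hp
  simp only [Finset.mem_image, Finset.mem_range] at hp
  obtain ⟨i, hi, h⟩ := hp
  exact ⟨i, hi, h⟩

structure Good (w m s e : ℤ) (n : ℕ) (S : ℤ) (x : ℕ → ℤ × ℤ) : Prop where
  hn : (n : ℤ) = 2 * w
  hm : 1 ≤ m
  hw : w = 2 * m + 3
  hs : x 0 = (0, s)
  he : x (n - 1) = (m, e)
  mem : ∀ i < n, x i ∈ gridF w
  inj : ∀ i < n, ∀ j < n, x i = x j → i = j
  nnr : ∀ i j : ℕ, i + 1 < n → i < j → j < n → dZ (x i) (x (i + 1)) ≤ dZ (x i) (x j)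
  clR : ∀ i : ℕ, i + 1 < n → dZ (x i) (x (i + 1)) ≤ w - (x i).1
  clL : ∀ i : ℕ, i + 1 < n → dZ (x i) (x (i + 1)) ≤ (x i).1 + 3
  low : S ≤ ∑ i ∈ Finset.range (n - 1), dZ (x i) (x (i + 1))

lemma Good.weaken {w m s e n S x} (h : Good w m s e n S x) {S' : ℤ} (hS : S' ≤ S) :
    Good w m s e n S' x := ⟨h.hn, h.hm, h.hw, h.hs, h.he, h.mem, h.inj, h.nnr, h.clR, h.clL, le_trans hS h.low⟩

lemma Good.flip {w m s e : ℤ} {n : ℕ} {S : ℤ} {x : ℕ → ℤ × ℤ}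
    (h : Good w m s e n S x) : Good w m (1 - s) (1 - e) n S (fun i => fl (x i)) := by
  refine ⟨h.hn, h.hm, h.hw, ?_, ?_, ?_, ?_, ?_, ?_, ?_, ?_⟩
  · rw [h.hs]; rfl
  · rw [h.he]; rfl
  · intro i hi
    have := mem_gridF.mp (h.mem i hi)
    rw [mem_gridF]
    refine ⟨this.1, this.2.1, ?_⟩
    rcases this.2.2 with h2 | h2 <;> simp [fl, h2]
  · intro i hi j hj hEq
    apply h.inj i hi j hj
    have h1 : (fl (x i)).1 = (fl (x j)).1 := by rw [hEq]
    have h2 : (fl (x i)).2 = (fl (x j)).2 := by rw [hEq]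
    simp only [fl] at h1 h2
    exact Prod.ext h1 (by omega)
  · intro i j h1 h2 h3
    rw [dZ_fl, dZ_fl]; exact h.nnr i j h1 h2 h3
  · intro i hi; rw [dZ_fl]; exact h.clR i hi
  · intro i hi; rw [dZ_fl]; exact h.clL i hi
  · calc S ≤ _ := h.low
       _ = _ := by exact Finset.sum_congr rfl (fun i _ => (dZ_fl _ _).symm)

def glue (w ra : ℤ) (n : ℕ) (A B : ℕ → ℤ × ℤ) : ℕ → ℤ × ℤ := fun i =>
  if i < n then A i
  else if i = n then (w, ra)
  else if i = n + 1 then (w + 1, ra)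
  else if i = n + 2 then (w + 1, 1 - ra)
  else if i = n + 3 then (w + 2, 1 - ra)
  else if i = n + 4 then (w + 2, ra)
  else if i < 2 * n + 5 then ((B (i - (n + 5))).1 + (w + 3), (B (i - (n + 5))).2)
  else (w, 1 - ra)

set_option maxHeartbeats 2000000 in
lemma assemble {w m ra SA SB : ℤ} {n : ℕ} {A B : ℕ → ℤ × ℤ}
    (hra : ra = 0 ∨ ra = 1)
    (hA : Good w m 0 ra n SA A) (hB : Good w m ra (1 - ra) n SB B) :
    Good (2 * w + 3) w 0 (1 - ra) (2 * n + 6) (SA + SB + 2 * m + 11) (glue w ra n A B) := by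
  have hm := hA.hm
  have hw := hA.hw
  have hnz := hA.hn
  have hn10 : 10 ≤ n := by
    have : (10 : ℤ) ≤ (n : ℤ) := by omega
    exact_mod_cast this
  obtain ⟨G, hG⟩ : ∃ G, G = glue w ra n A B := ⟨_, rfl⟩
  rw [← hG]
  -- evaluation lemmas
  have gA : ∀ i, i < n → G i = A i := by
    intro i hi; simp only [hG, glue]; split_ifs <;> first | rfl | omega
  have g0 : G n = (w, ra) := by
    simp only [hG, glue]; split_ifs <;> first | rfl | omega
  have g1 : G (n + 1) = (w + 1, ra) := by
    simp only [hG, glue]; split_ifs <;> first | rfl | omega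
  have g2 : G (n + 2) = (w + 1, 1 - ra) := by
    simp only [hG, glue]; split_ifs <;> first | rfl | omega
  have g3 : G (n + 3) = (w + 2, 1 - ra) := by
    simp only [hG, glue]; split_ifs <;> first | rfl | omega
  have g4 : G (n + 4) = (w + 2, ra) := by
    simp only [hG, glue]; split_ifs <;> first | rfl | omega
  have gB : ∀ t, t < n → G (n + 5 + t) = ((B t).1 + (w + 3), (B t).2) := by
    intro t ht
    have e : n + 5 + t - (n + 5) = t := by omega
    simp only [hG, glue, e]; split_ifs <;> first | rfl | omega
  have gL : G (2 * n + 5) = (w, 1 - ra) := by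
    simp only [hG, glue]; split_ifs <;> first | rfl | omega
  -- coordinate facts
  have memA : ∀ i, i < n → 0 ≤ (A i).1 ∧ (A i).1 < w ∧ ((A i).2 = 0 ∨ (A i).2 = 1) :=
    fun i hi => mem_gridF.mp (hA.mem i hi)
  have memB : ∀ i, i < n → 0 ≤ (B i).1 ∧ (B i).1 < w ∧ ((B i).2 = 0 ∨ (B i).2 = 1) :=
    fun i hi => mem_gridF.mp (hB.mem i hi)
  -- region descriptions: for any j in [n, 2n+6), column is ≥ w
  have colGe : ∀ j, n ≤ j → j < 2 * n + 6 → w ≤ (G j).1 := by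
    intro j h1 h2
    by_cases e0 : j = n
    · rw [e0, g0] <;> (try dsimp only) <;> omega
    by_cases e1 : j = n + 1
    · rw [e1, g1] <;> (try dsimp only) <;> omega
    by_cases e2 : j = n + 2
    · rw [e2, g2] <;> (try dsimp only) <;> omega
    by_cases e3 : j = n + 3
    · rw [e3, g3] <;> (try dsimp only) <;> omega
    by_cases e4 : j = n + 4
    · rw [e4, g4] <;> (try dsimp only) <;> omega
    by_cases e5 : j < 2 * n + 5
    · have hj : j = n + 5 + (j - (n + 5)) := by omega
      have ht : j - (n + 5) < n := by omega
      rw [hj, gB _ ht]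
      have := memB _ ht
      dsimp only
      omega
    · have hj : j = 2 * n + 5 := by omega
      rw [hj, gL] <;> (try dsimp only) <;> omega
  -- membership
  have memG : ∀ i, i < 2 * n + 6 → G i ∈ gridF (2 * w + 3) := by
    intro i hi
    rw [mem_gridF]
    by_cases c0 : i < n
    · rw [gA i c0]; have := memA i c0; exact ⟨this.1, by omega, this.2.2⟩
    by_cases e0 : i = n
    · rw [e0, g0]; exact ⟨by dsimp only; omega, by dsimp only; omega, by dsimp only; omega⟩
    by_cases e1 : i = n + 1
    · rw [e1, g1]; exact ⟨by dsimp only; omega, by dsimp only; omega, by dsimp only; omega⟩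
    by_cases e2 : i = n + 2
    · rw [e2, g2]; exact ⟨by dsimp only; omega, by dsimp only; omega, by dsimp only; omega⟩
    by_cases e3 : i = n + 3
    · rw [e3, g3]; exact ⟨by dsimp only; omega, by dsimp only; omega, by dsimp only; omega⟩
    by_cases e4 : i = n + 4
    · rw [e4, g4]; exact ⟨by dsimp only; omega, by dsimp only; omega, by dsimp only; omega⟩
    by_cases e5 : i < 2 * n + 5
    · have hj : i = n + 5 + (i - (n + 5)) := by omega
      have ht : i - (n + 5) < n := by omega
      rw [hj, gB _ ht]
      have := memB _ ht
      exact ⟨by dsimp only; omega, by dsimp only; omega, by dsimp only; omega⟩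
    · have hj : i = 2 * n + 5 := by omega
      rw [hj, gL]
      exact ⟨by dsimp only; omega, by dsimp only; omega, by dsimp only; omega⟩
  -- injectivity via ordered distinctness
  have key : ∀ i j, i < 2 * n + 6 → j < 2 * n + 6 → i < j → G i ≠ G j := by
    intro i j hi hj hij
    by_cases ci : i < n
    · by_cases cj : j < n
      · rw [gA i ci, gA j cj]
        intro h
        exact absurd (hA.inj i ci j cj h) (by omega)
      · have hcol := colGe j (by omega) hj
        rw [gA i ci]
        intro h
        have h2 := (memA i ci).2.1
        rw [h] at h2
        omega
    · -- i ≥ n, j > i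
      have hi' : n ≤ i := by omega
      by_cases mi : i ≤ n + 4
      · -- i in mid
        have hi5 : i = n ∨ i = n + 1 ∨ i = n + 2 ∨ i = n + 3 ∨ i = n + 4 := by omega
        by_cases mj : j ≤ n + 4
        · have hj5 : j = n ∨ j = n + 1 ∨ j = n + 2 ∨ j = n + 3 ∨ j = n + 4 := by omega
          rcases hi5 with rfl | rfl | rfl | rfl | rfl <;>
            rcases hj5 with rfl | rfl | rfl | rfl | rfl <;>
            simp only [g0, g1, g2, g3, g4, ne_eq, Prod.mk.injEq, not_and] <;>
            rcases hra with rfl | rfl <;> intro h <;> omega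
        · by_cases bj : j < 2 * n + 5
          · have htj : j = n + 5 + (j - (n + 5)) := by omega
            have htj' : j - (n + 5) < n := by omega
            have hmB := memB _ htj'
            rw [htj, gB _ htj']
            rcases hi5 with rfl | rfl | rfl | rfl | rfl <;>
              simp only [g0, g1, g2, g3, g4, ne_eq, Prod.mk.injEq, not_and] <;>
              intro h <;> omega
          · have hj' : j = 2 * n + 5 := by omega
            rw [hj', gL]
            rcases hi5 with rfl | rfl | rfl | rfl | rfl <;>
              simp only [g0, g1, g2, g3, g4, ne_eq, Prod.mk.injEq, not_and] <;>
              rcases hra with rfl | rfl <;> intro h <;> omega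
      · -- i in B region (i < 2n+5 since i < j ≤ 2n+5)
        have hti : i = n + 5 + (i - (n + 5)) := by omega
        have hti' : i - (n + 5) < n := by omega
        have hmBi := memB _ hti'
        by_cases bj : j < 2 * n + 5
        · have htj : j = n + 5 + (j - (n + 5)) := by omega
          have htj' : j - (n + 5) < n := by omega
          rw [hti, gB _ hti', htj, gB _ htj']
          intro h
          simp only [Prod.mk.injEq] at h
          have hBeq : B (i - (n + 5)) = B (j - (n + 5)) := Prod.ext (by omega) h.2
          have := hB.inj _ hti' _ htj' hBeq
          omega
        · have hj' : j = 2 * n + 5 := by omega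
          rw [hj', gL, hti, gB _ hti']
          intro h
          simp only [Prod.mk.injEq] at h
          omega
  have injG : ∀ i < 2 * n + 6, ∀ j < 2 * n + 6, G i = G j → i = j := by
    intro i hi j hj hEq
    rcases lt_trichotomy i j with h | h | h
    · exact absurd hEq (key i j hi hj h)
    · exact h
    · exact absurd hEq.symm (key j i hj hi h)
  -- helper evaluations for boundary steps
  have gAend : G (n - 1) = (m, ra) := by
    rw [gA (n - 1) (by omega), hA.he]
  have gBstart : G (n + 5) = (w + 3, ra) := by
    have h0 := gB 0 (by omega)
    have e : n + 5 + 0 = n + 5 := by omega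
    rw [e] at h0
    rw [h0, hB.hs]
    norm_num
  have gBend : G (2 * n + 4) = (m + (w + 3), 1 - ra) := by
    have h0 := gB (n - 1) (by omega)
    have e : n + 5 + (n - 1) = 2 * n + 4 := by omega
    rw [e] at h0
    rw [h0, hB.he]
  -- step values at boundaries
  have stepJump : dZ (G (n - 1)) (G n) = w - m := by
    rw [gAend, g0]; simp only [dZ]; omega
  have stepFinal : dZ (G (2 * n + 4)) (G (2 * n + 5)) = m + 3 := by
    rw [gBend, gL]; simp only [dZ]; omega
  have stepM0 : dZ (G n) (G (n + 1)) = 1 := by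
    rw [g0, g1]; simp only [dZ]; omega
  have stepM1 : dZ (G (n + 1)) (G (n + 2)) = 1 := by
    rw [g1, g2]; simp only [dZ]; rcases hra with rfl | rfl <;> omega
  have stepM2 : dZ (G (n + 2)) (G (n + 3)) = 1 := by
    rw [g2, g3]; simp only [dZ]; omega
  have stepM3 : dZ (G (n + 3)) (G (n + 4)) = 1 := by
    rw [g3, g4]; simp only [dZ]; rcases hra with rfl | rfl <;> omega
  have stepM4 : dZ (G (n + 4)) (G (n + 5)) = 1 := by
    rw [g4, gBstart]; simp only [dZ]; omega
  -- NNR property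
  have nnrG : ∀ i j : ℕ, i + 1 < 2 * n + 6 → i < j → j < 2 * n + 6 →
      dZ (G i) (G (i + 1)) ≤ dZ (G i) (G j) := by
    intro i j h1 h2 h3
    by_cases c1 : i + 1 < n
    · have ci : i < n := by omega
      rw [gA i ci, gA (i + 1) c1]
      by_cases cj : j < n
      · rw [gA j cj]; exact hA.nnr i j c1 h2 cj
      · have hcol := colGe j (by omega) h3
        have hclr := hA.clR i c1
        have hcl := col_le_dZ (A i) (G j)
        have hma := (memA i ci).2.1
        omega
    by_cases c2 : i + 1 = n
    · rw [c2, show i = n - 1 from by omega, stepJump]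
      have hcol := colGe j (by omega) h3
      have hcl : (G j).1 - m ≤ dZ (m, ra) (G j) := col_le_dZ (m, ra) (G j)
      rw [gAend]
      omega
    by_cases c3 : i ≤ n + 4
    · have hne := key i j (by omega) h3 h2
      have h1d : dZ (G i) (G (i + 1)) = 1 := by
        have hi5 : i = n ∨ i = n + 1 ∨ i = n + 2 ∨ i = n + 3 ∨ i = n + 4 := by omega
        rcases hi5 with rfl | rfl | rfl | rfl | rfl
        · exact stepM0
        · exact stepM1
        · exact stepM2
        · exact stepM3
        · exact stepM4
      rw [h1d]
      exact one_le_dZ hne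
    by_cases c4 : i < 2 * n + 4
    · -- B interior
      have hti : i = n + 5 + (i - (n + 5)) := by omega
      have hti' : i - (n + 5) < n := by omega
      have hti1 : i + 1 = n + 5 + (i - (n + 5) + 1) := by omega
      have hti1' : i - (n + 5) + 1 < n := by omega
      have e1 : G i = ((B (i - (n + 5))).1 + (w + 3), (B (i - (n + 5))).2) := by
        conv_lhs => rw [hti]
        exact gB _ hti'
      have e2 : G (i + 1) = ((B (i - (n + 5) + 1)).1 + (w + 3), (B (i - (n + 5) + 1)).2) := by
        conv_lhs => rw [hti1]
        exact gB _ hti1'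
      rw [e1, e2, dZ_tr]
      by_cases bj : j < 2 * n + 5
      · have htj : j = n + 5 + (j - (n + 5)) := by omega
        have htj' : j - (n + 5) < n := by omega
        rw [htj, gB _ htj', dZ_tr]
        exact hB.nnr _ _ hti1' (by omega) htj'
      · have hj' : j = 2 * n + 5 := by omega
        rw [hj', gL]
        have hclL := hB.clL (i - (n + 5)) hti1'
        have hd : (B (i - (n + 5))).1 + 3 ≤
            dZ ((B (i - (n + 5))).1 + (w + 3), (B (i - (n + 5))).2) (w, 1 - ra) := by
          simp only [dZ]
          have := memB _ hti'
          omega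
        omega
    · -- i = 2n+4, j = 2n+5 = i+1
      have hj' : j = i + 1 := by omega
      rw [hj']
  -- clearance R
  have clRG : ∀ i : ℕ, i + 1 < 2 * n + 6 → dZ (G i) (G (i + 1)) ≤ (2 * w + 3) - (G i).1 := by
    intro i h1
    by_cases c1 : i + 1 < n
    · have ci : i < n := by omega
      rw [gA i ci, gA (i + 1) c1]
      have := hA.clR i c1
      have := (memA i ci).1
      omega
    by_cases c2 : i + 1 = n
    · rw [c2, show i = n - 1 from by omega, stepJump, gAend]
      dsimp only
      omega
    by_cases c3 : i ≤ n + 4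
    · have h1d : dZ (G i) (G (i + 1)) = 1 := by
        have hi5 : i = n ∨ i = n + 1 ∨ i = n + 2 ∨ i = n + 3 ∨ i = n + 4 := by omega
        rcases hi5 with rfl | rfl | rfl | rfl | rfl
        · exact stepM0
        · exact stepM1
        · exact stepM2
        · exact stepM3
        · exact stepM4
      rw [h1d]
      have hcol := colGe i (by omega) (by omega)
      have hcolu := (mem_gridF.mp (memG i (by omega))).2.1
      omega
    by_cases c4 : i < 2 * n + 4
    · have hti : i = n + 5 + (i - (n + 5)) := by omega
      have hti' : i - (n + 5) < n := by omega
      have hti1 : i + 1 = n + 5 + (i - (n + 5) + 1) := by omega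
      have hti1' : i - (n + 5) + 1 < n := by omega
      have e1 : G i = ((B (i - (n + 5))).1 + (w + 3), (B (i - (n + 5))).2) := by
        conv_lhs => rw [hti]
        exact gB _ hti'
      have e2 : G (i + 1) = ((B (i - (n + 5) + 1)).1 + (w + 3), (B (i - (n + 5) + 1)).2) := by
        conv_lhs => rw [show i + 1 = n + 5 + (i - (n + 5) + 1) from by omega]
        exact gB _ hti1'
      rw [e1, e2, dZ_tr]
      have := hB.clR (i - (n + 5)) hti1'
      dsimp only
      omega
    · rw [show i = 2 * n + 4 from by omega, stepFinal, gBend]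
      dsimp only
      omega
  -- clearance L
  have clLG : ∀ i : ℕ, i + 1 < 2 * n + 6 → dZ (G i) (G (i + 1)) ≤ (G i).1 + 3 := by
    intro i h1
    by_cases c1 : i + 1 < n
    · have ci : i < n := by omega
      rw [gA i ci, gA (i + 1) c1]
      exact hA.clL i c1
    by_cases c2 : i + 1 = n
    · rw [c2, show i = n - 1 from by omega, stepJump, gAend]
      dsimp only
      omega
    by_cases c3 : i ≤ n + 4
    · have h1d : dZ (G i) (G (i + 1)) = 1 := by
        have hi5 : i = n ∨ i = n + 1 ∨ i = n + 2 ∨ i = n + 3 ∨ i = n + 4 := by omega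
        rcases hi5 with rfl | rfl | rfl | rfl | rfl
        · exact stepM0
        · exact stepM1
        · exact stepM2
        · exact stepM3
        · exact stepM4
      have hcol := colGe i (by omega) (by omega)
      omega
    by_cases c4 : i < 2 * n + 4
    · have hti : i = n + 5 + (i - (n + 5)) := by omega
      have hti' : i - (n + 5) < n := by omega
      have hti1' : i - (n + 5) + 1 < n := by omega
      have e1 : G i = ((B (i - (n + 5))).1 + (w + 3), (B (i - (n + 5))).2) := by
        conv_lhs => rw [hti]
        exact gB _ hti'
      have e2 : G (i + 1) = ((B (i - (n + 5) + 1)).1 + (w + 3), (B (i - (n + 5) + 1)).2) := by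
        conv_lhs => rw [show i + 1 = n + 5 + (i - (n + 5) + 1) from by omega]
        exact gB _ hti1'
      rw [e1, e2, dZ_tr]
      have := hB.clL (i - (n + 5)) hti1'
      have := memB _ hti'
      dsimp only
      omega
    · rw [show i = 2 * n + 4 from by omega, stepFinal, gBend]
      dsimp only
      omega
  -- the sum lower bound
  have lowG : SA + SB + 2 * m + 11 ≤ ∑ i ∈ Finset.range (2 * n + 6 - 1), dZ (G i) (G (i + 1)) := by
    have e0 : 2 * n + 6 - 1 = (n - 1) + (6 + n) := by omega
    rw [e0, Finset.sum_range_add, Finset.sum_range_add]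
    have eA : ∑ i ∈ Finset.range (n - 1), dZ (G i) (G (i + 1))
        = ∑ i ∈ Finset.range (n - 1), dZ (A i) (A (i + 1)) := by
      refine Finset.sum_congr rfl (fun i hi => ?_)
      have hi' := Finset.mem_range.mp hi
      rw [gA i (by omega), gA (i + 1) (by omega)]
    have e6 : ∑ i ∈ Finset.range 6, dZ (G (n - 1 + i)) (G (n - 1 + i + 1)) = (w - m) + 5 := by
      simp only [Finset.sum_range_succ, Finset.sum_range_zero]
      have t0 : dZ (G (n - 1 + 0)) (G (n - 1 + 0 + 1)) = w - m := by
        rw [show n - 1 + 0 + 1 = n from by omega, show n - 1 + 0 = n - 1 from by omega]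
        exact stepJump
      have t1 : dZ (G (n - 1 + 1)) (G (n - 1 + 1 + 1)) = 1 := by
        rw [show n - 1 + 1 + 1 = n + 1 from by omega, show n - 1 + 1 = n from by omega]
        exact stepM0
      have t2 : dZ (G (n - 1 + 2)) (G (n - 1 + 2 + 1)) = 1 := by
        rw [show n - 1 + 2 + 1 = n + 2 from by omega, show n - 1 + 2 = n + 1 from by omega]
        exact stepM1
      have t3 : dZ (G (n - 1 + 3)) (G (n - 1 + 3 + 1)) = 1 := by
        rw [show n - 1 + 3 + 1 = n + 3 from by omega, show n - 1 + 3 = n + 2 from by omega]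
        exact stepM2
      have t4 : dZ (G (n - 1 + 4)) (G (n - 1 + 4 + 1)) = 1 := by
        rw [show n - 1 + 4 + 1 = n + 4 from by omega, show n - 1 + 4 = n + 3 from by omega]
        exact stepM3
      have t5 : dZ (G (n - 1 + 5)) (G (n - 1 + 5 + 1)) = 1 := by
        rw [show n - 1 + 5 + 1 = n + 5 from by omega, show n - 1 + 5 = n + 4 from by omega]
        exact stepM4
      rw [t0, t1, t2, t3, t4, t5]
      ring
    have eB : ∑ i ∈ Finset.range n, dZ (G (n - 1 + (6 + i))) (G (n - 1 + (6 + i) + 1))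
        = (∑ i ∈ Finset.range (n - 1), dZ (B i) (B (i + 1))) + (m + 3) := by
      have ern : Finset.range n = Finset.range ((n - 1) + 1) := by
        congr 1
        omega
      rw [ern, Finset.sum_range_succ]
      congr 1
      · refine Finset.sum_congr rfl (fun i hi => ?_)
        have hi' := Finset.mem_range.mp hi
        have ra1 : n - 1 + (6 + i) = n + 5 + i := by omega
        have ra2 : n - 1 + (6 + i) + 1 = n + 5 + (i + 1) := by omega
        rw [ra2, ra1, gB i (by omega), gB (i + 1) (by omega), dZ_tr]
      · have ra1 : n - 1 + (6 + (n - 1)) = 2 * n + 4 := by omega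
        have ra2 : n - 1 + (6 + (n - 1)) + 1 = 2 * n + 5 := by omega
        rw [ra2, ra1, stepFinal]
    rw [eA, e6, eB]
    have hlA := hA.low
    have hlB := hB.low
    omega
  -- assemble the structure
  refine ⟨?_, ?_, ?_, ?_, ?_, memG, injG, nnrG, clRG, clLG, lowG⟩
  · push_cast; omega
  · omega
  · rfl
  · rw [gA 0 (by omega), hA.hs]
  · have e : 2 * n + 6 - 1 = 2 * n + 5 := by omega
    rw [e, gL]

-- base tours at k = 1 (w = 13, m = 5, n = 26)
def B1L : List (ℤ × ℤ) :=
  [(0,0),(0,1),(1,1),(2,1),(3,1),(4,1),(4,0),(3,0),(2,0),(1,0),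
   (5,0),(6,0),(6,1),(7,1),(7,0),
   (8,0),(9,0),(10,0),(11,0),(12,0),(12,1),(11,1),(10,1),(9,1),(8,1),
   (5,1)]

def B0L : List (ℤ × ℤ) :=
  [(0,0),(0,1),(1,1),(1,0),(2,0),(3,0),(4,0),(4,1),(3,1),(2,1),
   (5,1),(6,1),(6,0),(7,0),(7,1),
   (8,1),(9,1),(10,1),(11,1),(12,1),(12,0),(11,0),(10,0),(9,0),(8,0),
   (5,0)]

def xB1 : ℕ → ℤ × ℤ := fun i => B1L.getD i (0, 0)
def xB0 : ℕ → ℤ × ℤ := fun i => B0L.getD i (0, 0)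

set_option maxRecDepth 100000 in
lemma base1 : Good 13 5 0 1 26 30 xB1 := by
  have H1 : ∀ i < 26, xB1 i ∈ gridF 13 := by decide
  have H2 : ∀ i < 26, ∀ j < 26, xB1 i = xB1 j → i = j := by decide
  have H3 : ∀ i < 25, ∀ j < 26, i < j → dZ (xB1 i) (xB1 (i+1)) ≤ dZ (xB1 i) (xB1 j) := by decide
  have H4 : ∀ i < 25, dZ (xB1 i) (xB1 (i+1)) ≤ 13 - (xB1 i).1 := by decide
  have H5 : ∀ i < 25, dZ (xB1 i) (xB1 (i+1)) ≤ (xB1 i).1 + 3 := by decide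
  refine ⟨by norm_num, by norm_num, by norm_num, by decide, by decide, H1, H2, ?_, ?_, ?_, by decide⟩
  · exact fun i j h1 h2 h3 => H3 i (by omega) j h3 h2
  · exact fun i h => H4 i (by omega)
  · exact fun i h => H5 i (by omega)

set_option maxRecDepth 100000 in
lemma base0 : Good 13 5 0 0 26 29 xB0 := by
  have H1 : ∀ i < 26, xB0 i ∈ gridF 13 := by decide
  have H2 : ∀ i < 26, ∀ j < 26, xB0 i = xB0 j → i = j := by decide
  have H3 : ∀ i < 25, ∀ j < 26, i < j → dZ (xB0 i) (xB0 (i+1)) ≤ dZ (xB0 i) (xB0 j) := by decide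
  have H4 : ∀ i < 25, dZ (xB0 i) (xB0 (i+1)) ≤ 13 - (xB0 i).1 := by decide
  have H5 : ∀ i < 25, dZ (xB0 i) (xB0 (i+1)) ≤ (xB0 i).1 + 3 := by decide
  refine ⟨by norm_num, by norm_num, by norm_num, by decide, by decide, H1, H2, ?_, ?_, ?_, by decide⟩
  · exact fun i j h1 h2 h3 => H3 i (by omega) j h3 h2
  · exact fun i h => H4 i (by omega)
  · exact fun i h => H5 i (by omega)

lemma exists_good : ∀ k : ℕ, 1 ≤ k →
    ∃ x0 x1 : ℕ → ℤ × ℤ,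
      Good (8 * 2 ^ k - 3) (4 * 2 ^ k - 3) 0 0 (16 * 2 ^ k - 6) ((4 * (k : ℤ) + 8) * 2 ^ k - 4) x0 ∧
      Good (8 * 2 ^ k - 3) (4 * 2 ^ k - 3) 0 1 (16 * 2 ^ k - 6) ((4 * (k : ℤ) + 8) * 2 ^ k - 1) x1 := by
  intro k
  induction k with
  | zero => omega
  | succ k ih =>
    intro _
    by_cases hk : k = 0
    · subst hk
      refine ⟨xB0, xB1, ?_, ?_⟩
      · have h := base0.weaken (show (20 : ℤ) ≤ 29 by norm_num)
        norm_num
        convert h using 2 <;> norm_num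
      · have h := base1.weaken (show (23 : ℤ) ≤ 30 by norm_num)
        norm_num
        convert h using 2 <;> norm_num
    · have hk1 : 1 ≤ k := by omega
      obtain ⟨x0, x1, h0, h1⟩ := ih hk1
      have hQ : 1 ≤ (2:ℕ) ^ k := Nat.one_le_two_pow
      have e_w : (8 * (2:ℤ) ^ (k+1) - 3) = 2 * (8 * 2 ^ k - 3) + 3 := by ring
      have e_m : (4 * (2:ℤ) ^ (k+1) - 3) = 8 * 2 ^ k - 3 := by ring
      have e_n : 16 * 2 ^ (k+1) - 6 = 2 * (16 * 2 ^ k - 6) + 6 := by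
        have : (2:ℕ) ^ (k+1) = 2 * 2 ^ k := by ring
        omega
      -- type 1 at level k+1 : assemble with ra = 0, A = x0, B = x1
      have hres1 := assemble (Or.inl rfl) h0 h1
      -- type 0 at level k+1 : assemble with ra = 1, A = x1, B = flip x1
      have hres0 := assemble (Or.inr rfl) h1 h1.flip
      refine ⟨glue (8 * 2 ^ k - 3) 1 (16 * 2 ^ k - 6) x1 (fun i => fl (x1 i)),
              glue (8 * 2 ^ k - 3) 0 (16 * 2 ^ k - 6) x0 x1, ?_, ?_⟩
      · rw [e_w, e_m, e_n]
        refine hres0.weaken ?_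
        have key : ((4 * ((k:ℤ)+1) + 8) * 2 ^ (k+1) - 4) + 7 =
            ((4 * (k:ℤ) + 8) * 2 ^ k - 1) + ((4 * (k:ℤ) + 8) * 2 ^ k - 1) +
              2 * (4 * 2 ^ k - 3) + 11 := by ring
        push_cast at key ⊢
        linarith [key]
      · rw [e_w, e_m, e_n]
        refine hres1.weaken ?_
        have key : ((4 * ((k:ℤ)+1) + 8) * 2 ^ (k+1) - 1) + 1 =
            ((4 * (k:ℤ) + 8) * 2 ^ k - 4) + ((4 * (k:ℤ) + 8) * 2 ^ k - 1) +
              2 * (4 * 2 ^ k - 3) + 11 := by ring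
        push_cast at key ⊢
        linarith [key]

def xS : ℕ → ℤ × ℤ := fun i =>
  ([(0,0),(1,0),(2,0),(3,0),(4,0),(4,1),(3,1),(2,1),(1,1),(0,1)] : List (ℤ × ℤ)).getD i (0, 0)

def snake (wN : ℕ) : ℕ → ℤ × ℤ := fun i =>
  if i < wN then ((i : ℤ), 0) else (2 * (wN : ℤ) - 1 - (i : ℤ), 1)

lemma snake_lemma (wN : ℕ) (hw5 : 1 ≤ wN) :
    (∀ i < 2 * wN, snake wN i ∈ gridF (wN : ℤ)) ∧
    (∀ i < 2 * wN, ∀ j < 2 * wN, snake wN i = snake wN j → i = j) ∧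
    (∀ p ∈ gridF (wN : ℤ), ∃ i < 2 * wN, snake wN i = p) ∧
    (∀ i < 2 * wN, dZ (snake wN i) (snake wN ((i + 1) % (2 * wN))) = 1) := by
  refine ⟨?_, ?_, ?_, ?_⟩
  · intro i hi
    rw [mem_gridF]
    by_cases c : i < wN
    · simp only [snake, if_pos c]
      refine ⟨by omega, by (try dsimp only); omega, by left; trivial⟩
    · simp only [snake, if_neg c]
      refine ⟨by (try dsimp only); omega, by (try dsimp only); omega, by right; trivial⟩
  · intro i hi j hj h
    by_cases ci : i < wN <;> by_cases cj : j < wN <;>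
      simp only [snake, if_pos, if_neg, ci, cj, if_true, if_false, Prod.mk.injEq] at h <;>
      omega
  · intro p hp
    rw [mem_gridF] at hp
    rcases hp.2.2 with hr | hr
    · refine ⟨p.1.toNat, by omega, ?_⟩
      have c : p.1.toNat < wN := by omega
      simp only [snake, if_pos c]
      refine Prod.ext (by (try dsimp only); omega) (by (try dsimp only); omega)
    · refine ⟨(2 * (wN : ℤ) - 1 - p.1).toNat, by omega, ?_⟩
      have c : ¬ ((2 * (wN : ℤ) - 1 - p.1).toNat < wN) := by omega
      simp only [snake, if_neg c]
      refine Prod.ext (by (try dsimp only); omega) (by (try dsimp only); omega)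
  · intro i hi
    by_cases h : i + 1 = 2 * wN
    · rw [h, Nat.mod_self]
      have c : ¬ (i < wN) := by omega
      simp only [snake, if_neg c, if_pos (show 0 < wN from hw5), dZ]
      (try dsimp only)
      omega
    · rw [Nat.mod_eq_of_lt (by omega)]
      by_cases c1 : i + 1 < wN
      · simp only [snake, if_pos (show i < wN from by omega), if_pos c1, dZ]
        (try dsimp only)
        omega
      by_cases c2 : i < wN
      · simp only [snake, if_pos c2, if_neg c1, dZ]
        (try dsimp only)
        omega
      · simp only [snake, if_neg c2, if_neg (show ¬ i + 1 < wN from by omega), dZ]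
        (try dsimp only)
        omega

end NNR7

open NNR7 in
/-- On the `2 × (8·2^k − 3)` grid `V_k` (with `n = 16·2^k − 6` points) under
the rectilinear distance, there is an NNR tour starting at `(0,0)` whose closed length is
at least `(12 + 4k)·2^k − 3`; every traveling salesman tour has length at least `n` and
some tour has length exactly `n`; hence the ratio of the NNR tour length to the optimum
tour length is at least `(log₂ n − 1)/4`. -/
theorem nnr_tour_ratio_rectilinear (k : ℕ) (n : ℕ) (hn : n = 16 * 2 ^ k - 6)
    (V : Set (ℤ × ℤ))
    (hV : V = {p : ℤ × ℤ | 0 ≤ p.1 ∧ p.1 ≤ 8 * 2 ^ k - 4 ∧ (p.2 = 0 ∨ p.2 = 1)})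
    (d : ℤ × ℤ → ℤ × ℤ → ℝ)
    (hd : ∀ p q : ℤ × ℤ, d p q = |(p.1 : ℝ) - (q.1 : ℝ)| + |(p.2 : ℝ) - (q.2 : ℝ)|) :
    (∃ x : ℕ → ℤ × ℤ,
      (∀ i < n, x i ∈ V) ∧
      (∀ i < n, ∀ j < n, x i = x j → i = j) ∧
      (∀ p ∈ V, ∃ i < n, x i = p) ∧
      x 0 = (0, 0) ∧
      (∀ i < n - 1, ∀ y ∈ V, (∀ j ≤ i, x j ≠ y) →
        d (x i) (x (i + 1)) ≤ d (x i) y) ∧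
      (12 + 4 * (k : ℝ)) * 2 ^ k - 3
        ≤ (∑ i ∈ Finset.range (n - 1), d (x i) (x (i + 1))) + d (x (n - 1)) (x 0) ∧
      (Real.logb 2 n - 1) / 4
        ≤ ((∑ i ∈ Finset.range (n - 1), d (x i) (x (i + 1))) + d (x (n - 1)) (x 0)) / n) ∧
    (∀ y : ℕ → ℤ × ℤ,
      (∀ i < n, y i ∈ V) →
      (∀ i < n, ∀ j < n, y i = y j → i = j) →
      (∀ p ∈ V, ∃ i < n, y i = p) →
      (n : ℝ) ≤ ∑ i ∈ Finset.range n, d (y i) (y ((i + 1) % n))) ∧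
    (∃ y : ℕ → ℤ × ℤ,
      (∀ i < n, y i ∈ V) ∧
      (∀ i < n, ∀ j < n, y i = y j → i = j) ∧
      (∀ p ∈ V, ∃ i < n, y i = p) ∧
      ∑ i ∈ Finset.range n, d (y i) (y ((i + 1) % n)) = (n : ℝ)) := by

  have hdR : ∀ p q : ℤ × ℤ, d p q = ((dZ p q : ℤ) : ℝ) := by
    intro p q
    rw [hd]
    simp only [dZ]
    push_cast [Nat.cast_natAbs]
    ring
  have hQ1 : 1 ≤ (2 : ℕ) ^ k := Nat.one_le_two_pow
  have hQZ1 : (1 : ℤ) ≤ 2 ^ k := by exact_mod_cast hQ1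
  have h6 : 6 ≤ 16 * 2 ^ k := le_trans (by norm_num) (Nat.mul_le_mul_left 16 hQ1)
  have hn10 : 10 ≤ n := by
    obtain ⟨Q, hQe⟩ : ∃ Q, (2 : ℕ) ^ k = Q := ⟨_, rfl⟩
    rw [hQe] at hn hQ1
    omega
  have hnZ : (n : ℤ) = 2 * (8 * 2 ^ k - 3) := by
    rw [hn]
    push_cast [Nat.cast_sub h6]
    ring
  have hw0 : (0 : ℤ) ≤ 8 * 2 ^ k - 3 := by linarith
  -- the bad NNR tour
  obtain ⟨x, hmem, hinj, hnnr, hx0, hlow⟩ :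
      ∃ x : ℕ → ℤ × ℤ,
        (∀ i < n, x i ∈ gridF (8 * 2 ^ k - 3)) ∧
        (∀ i < n, ∀ j < n, x i = x j → i = j) ∧
        (∀ i j : ℕ, i + 1 < n → i < j → j < n →
          dZ (x i) (x (i + 1)) ≤ dZ (x i) (x j)) ∧
        x 0 = (0, 0) ∧
        ((12 + 4 * (k : ℤ)) * 2 ^ k - 3 ≤
          (∑ i ∈ Finset.range (n - 1), dZ (x i) (x (i + 1))) + dZ (x (n - 1)) (x 0)) := by
    by_cases hk : k = 0
    · subst hk
      norm_num at hn
      subst hn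
      refine ⟨xS, by decide, by decide, ?_, by decide, by decide⟩
      have H : ∀ i < 9, ∀ j < 10, i < j → dZ (xS i) (xS (i + 1)) ≤ dZ (xS i) (xS j) := by decide
      exact fun i j h1 h2 h3 => H i (by omega) j h3 h2
    · obtain ⟨x0, x1, h0, h1⟩ := exists_good k (by omega)
      subst hn
      have hend : dZ (x1 (16 * 2 ^ k - 6 - 1)) (x1 0) = 4 * 2 ^ k - 2 := by
        rw [h1.he, h1.hs]
        simp only [dZ]
        rw [sub_zero, sub_zero, Int.natAbs_of_nonneg (by linarith)]
        norm_num
        ring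
      refine ⟨x1, h1.mem, h1.inj, h1.nnr, h1.hs, ?_⟩
      have hid : (12 + 4 * (k : ℤ)) * 2 ^ k - 3 =
          ((4 * (k : ℤ) + 8) * 2 ^ k - 1) + (4 * 2 ^ k - 2) := by ring
      have := h1.low
      rw [hend]
      linarith
  have hcover : ∀ p ∈ gridF (8 * 2 ^ k - 3 : ℤ), ∃ i < n, x i = p := by
    refine cover_of ?_ hmem hinj
    rw [card_gridF hw0]
    have h2 : ((2 * (8 * 2 ^ k - 3 : ℤ).toNat : ℕ) : ℤ) = (n : ℤ) := by
      push_cast [Int.toNat_of_nonneg hw0]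
      omega
    exact_mod_cast h2
  have hViff : ∀ p : ℤ × ℤ, p ∈ V ↔ p ∈ gridF (8 * 2 ^ k - 3 : ℤ) := by
    intro p
    rw [hV, mem_gridF]
    simp only [Set.mem_setOf_eq]
    constructor
    · rintro ⟨a, b, c⟩; exact ⟨a, by linarith, c⟩
    · rintro ⟨a, b, c⟩; exact ⟨a, by linarith, c⟩
  -- real-valued facts
  have hsumx : (∑ i ∈ Finset.range (n - 1), d (x i) (x (i + 1))) + d (x (n - 1)) (x 0)
      = ((((∑ i ∈ Finset.range (n - 1), dZ (x i) (x (i + 1))) + dZ (x (n - 1)) (x 0)) : ℤ) : ℝ) := by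
    rw [Finset.sum_congr rfl (fun i _ => hdR (x i) (x (i + 1))), hdR]
    push_cast
    ring
  have hTle : ((12 + 4 * (k : ℝ)) * 2 ^ k - 3)
      ≤ (∑ i ∈ Finset.range (n - 1), d (x i) (x (i + 1))) + d (x (n - 1)) (x 0) := by
    rw [hsumx]
    calc (12 + 4 * (k : ℝ)) * 2 ^ k - 3
        = (((12 + 4 * (k : ℤ)) * 2 ^ k - 3 : ℤ) : ℝ) := by push_cast; ring
      _ ≤ _ := Int.cast_le.mpr hlow
  have hnR : (n : ℝ) = 16 * 2 ^ k - 6 := by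
    rw [hn]
    push_cast [Nat.cast_sub h6]
    ring
  have h2kR : (1 : ℝ) ≤ 2 ^ k := by exact_mod_cast hQ1
  have hnpos : (0 : ℝ) < n := by rw [hnR]; linarith
  refine ⟨⟨x, ?_, hinj, ?_, hx0, ?_, hTle, ?_⟩, ?_, ?_⟩
  · exact fun i hi => (hViff (x i)).mpr (hmem i hi)
  · exact fun p hp => hcover p ((hViff p).mp hp)
  · -- NNR condition
    intro i hi y hy hnot
    obtain ⟨j, hj, hxj⟩ := hcover y ((hViff y).mp hy)
    have hij : i < j := by
      by_contra hle
      push_neg at hle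
      exact hnot j hle hxj
    rw [hdR, hdR]
    rw [← hxj]
    exact_mod_cast hnnr i j (by omega) hij hj
  · -- ratio bound
    have hlogb : Real.logb 2 (n : ℝ) ≤ (k : ℝ) + 4 := by
      have hle : (n : ℝ) ≤ 2 ^ (k + 4) := by
        rw [hnR, show ((2 : ℝ)) ^ (k + 4) = 16 * 2 ^ k from by ring]
        linarith
      calc Real.logb 2 (n : ℝ) ≤ Real.logb 2 ((2 : ℝ) ^ (k + 4)) :=
            Real.logb_le_logb_of_le (by norm_num) hnpos hle
        _ = ((k + 4 : ℕ) : ℝ) * Real.logb 2 2 := by rw [Real.logb_pow]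
        _ = (k : ℝ) + 4 := by
            rw [Real.logb_self_eq_one (by norm_num)]
            push_cast
            ring
    have hTn : ((k : ℝ) + 3) / 4 ≤ ((12 + 4 * (k : ℝ)) * 2 ^ k - 3) / n := by
      rw [div_le_div_iff₀ (by norm_num) hnpos, hnR]
      have hid : 4 * ((12 + 4 * (k : ℝ)) * 2 ^ k - 3)
          - ((k : ℝ) + 3) * (16 * 2 ^ k - 6) = 6 * (k : ℝ) + 6 := by ring
      have hk0 : (0 : ℝ) ≤ (k : ℝ) := Nat.cast_nonneg k
      linarith
    calc (Real.logb 2 n - 1) / 4 ≤ ((k : ℝ) + 3) / 4 := by linarith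
      _ ≤ ((12 + 4 * (k : ℝ)) * 2 ^ k - 3) / n := hTn
      _ ≤ _ := (div_le_div_iff_of_pos_right hnpos).mpr hTle
  · -- TSP lower bound
    intro y hymem hyinj _
    have hterm : ∀ i ∈ Finset.range n, (1 : ℝ) ≤ d (y i) (y ((i + 1) % n)) := by
      intro i hi
      have hi' := Finset.mem_range.mp hi
      have hjlt : (i + 1) % n < n := Nat.mod_lt _ (by omega)
      have hij : i ≠ (i + 1) % n := by
        by_cases h : i + 1 = n
        · rw [h, Nat.mod_self]; omega
        · rw [Nat.mod_eq_of_lt (by omega)]; omega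
      have hne : y i ≠ y ((i + 1) % n) := fun hEq => hij (hyinj i hi' _ hjlt hEq)
      rw [hdR]
      exact_mod_cast one_le_dZ hne
    calc (n : ℝ) = ∑ _i ∈ Finset.range n, (1 : ℝ) := by
          rw [Finset.sum_const, Finset.card_range]; simp
      _ ≤ _ := Finset.sum_le_sum hterm
  · -- the optimal snake tour
    obtain ⟨QN, hQN⟩ : ∃ q, (2 : ℕ) ^ k = q := ⟨_, rfl⟩
    have hwN1 : 1 ≤ 8 * 2 ^ k - 3 := by rw [hQN]; omega
    have hnw : n = 2 * (8 * 2 ^ k - 3) := by rw [hn, hQN]; rw [hQN] at hQ1; omega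
    have hcast : (((8 * 2 ^ k - 3 : ℕ)) : ℤ) = (8 * 2 ^ k - 3 : ℤ) := by
      have h3 : 3 ≤ 8 * (2 : ℕ) ^ k := le_trans (by norm_num) (Nat.mul_le_mul_left 8 hQ1)
      push_cast [Nat.cast_sub h3]
      ring
    obtain ⟨hSmem, hSinj, hScover, hSstep⟩ := snake_lemma (8 * 2 ^ k - 3) hwN1
    rw [hcast] at hSmem hScover
    refine ⟨snake (8 * 2 ^ k - 3), ?_, ?_, ?_, ?_⟩
    · intro i hi
      exact (hViff _).mpr (hSmem i (by omega))
    · intro i hi j hj h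
      exact hSinj i (by omega) j (by omega) h
    · intro p hp
      obtain ⟨i, hi, he⟩ := hScover p ((hViff p).mp hp)
      exact ⟨i, by omega, he⟩
    · have hterm : ∀ i ∈ Finset.range n, d (snake (8 * 2 ^ k - 3) i)
          (snake (8 * 2 ^ k - 3) ((i + 1) % n)) = 1 := by
        intro i hi
        have hi' := Finset.mem_range.mp hi
        rw [hdR]
        have := hSstep i (by omega)
        rw [show (i + 1) % n = (i + 1) % (2 * (8 * 2 ^ k - 3)) from by rw [hnw], this]
        norm_num
      rw [Finset.sum_congr rfl hterm, Finset.sum_const, Finset.card_range]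
      simp
end
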